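/- arXiv:0712.3678 — 3 statements merged into one kernel-verified Lean document; each statement's English description precedes it below -/
import Mathlib

section
/- Discrete Poincaré inequality (Lemma 3.1): Let M > 0. There exists a constant β > 0 depending only on d, r and M (in particular independent of h ∈ (0,1] and of the offset v) such that for every h ∈ (0,1] and every finitely supported grid function u : ℤ^d → ℝ satisfying u_m = 0 whenever the grid-knot x_m lies outside the cube [−M, M]^d, one has q_R(u) ≥ β² ( |u|²_{R2} + q_R(u) ). -/
noncomputable section

/-- `vol(R) = r₁ ⋯ r_d`. -/
def volR (d : ℕ) (r : Fin d → ℕ) : ℝ := ∏ i, (r i : ℝ)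

/-- Forward finite difference `(U_i u)_m = (u_{m+e_i} - u_m)/(r_i h)`. -/
def fdiff (d : ℕ) (h : ℝ) (r : Fin d → ℕ) (u : (Fin d → ℤ) → ℝ) (i : Fin d)
    (m : Fin d → ℤ) : ℝ :=
  (u (m + Pi.single i 1) - u m) / ((r i : ℝ) * h)

/-- The discrete norm `|u|²_{R2} = vol(R) Σ_m u_m²`. -/
def norm2R (d : ℕ) (r : Fin d → ℕ) (u : (Fin d → ℤ) → ℝ) : ℝ :=
  volR d r * ∑' m : Fin d → ℤ, u m ^ 2

/-- The discrete Dirichlet form `q_R(u) = vol(R) Σ_i Σ_m (U_i u)_m²`. -/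
def qR (d : ℕ) (h : ℝ) (r : Fin d → ℕ) (u : (Fin d → ℤ) → ℝ) : ℝ :=
  volR d r * ∑ i : Fin d, ∑' m : Fin d → ℤ, (fdiff d h r u i m) ^ 2

lemma tel_aux (f : ℤ → ℝ) (k : ℤ) (N : ℕ) :
    ∑ j ∈ Finset.Icc k (k + (N : ℤ) - 1), (f (j + 1) - f j) = f (k + (N : ℤ)) - f k := by
  induction N with
  | zero =>
      rw [Finset.Icc_eq_empty (by omega)]
      simp
  | succ n ih =>
      have hins : Finset.Icc k (k + ((n + 1 : ℕ) : ℤ) - 1) =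
          insert (k + (n : ℤ)) (Finset.Icc k (k + (n : ℤ) - 1)) := by
        ext x
        simp only [Finset.mem_Icc, Finset.mem_insert]
        push_cast
        omega
      rw [hins, Finset.sum_insert (by simp only [Finset.mem_Icc]; omega), ih]
      have harg : k + ((n + 1 : ℕ) : ℤ) = k + (n : ℤ) + 1 := by push_cast; ring
      rw [harg]
      ring

/-- telescoping sum over an integer interval -/
lemma sum_telescope_Icc (f : ℤ → ℝ) (k b : ℤ) (hkb : k ≤ b + 1) :
    ∑ j ∈ Finset.Icc k b, (f (j + 1) - f j) = f (b + 1) - f k := by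
  obtain ⟨N, hN⟩ : ∃ N : ℕ, b + 1 = k + (N : ℤ) := ⟨(b + 1 - k).toNat, by omega⟩
  have hb' : b = k + (N : ℤ) - 1 := by omega
  rw [hb', show k + (N : ℤ) - 1 + 1 = k + (N : ℤ) by ring]
  exact tel_aux f k N

/-- one-dimensional discrete Poincaré inequality -/
lemma oneD (f : ℤ → ℝ) (c t M : ℝ) (ht : 0 < t) (hM : 0 < M)
    (hsupp : ∀ k : ℤ, f k ≠ 0 → |c + t * (k : ℝ)| ≤ M) :
    ∑' k : ℤ, f k ^ 2 ≤ (2 * M / t + 1) ^ 2 * ∑' k : ℤ, (f (k + 1) - f k) ^ 2 := by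
  set a : ℤ := ⌈(-M - c) / t⌉ with ha
  set b : ℤ := ⌊(M - c) / t⌋ with hb
  have hsupp' : ∀ k : ℤ, f k ≠ 0 → a ≤ k ∧ k ≤ b := by
    intro k hk
    have habs := hsupp k hk
    rw [abs_le] at habs
    constructor
    · rw [ha, Int.ceil_le]
      rw [div_le_iff₀ ht]
      nlinarith [habs.1]
    · rw [hb, Int.le_floor]
      rw [le_div_iff₀ ht]
      nlinarith [habs.2]
  -- f vanishes outside Icc a b
  have hfz : ∀ k : ℤ, k ∉ Finset.Icc a b → f k = 0 := by
    intro k hk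
    by_contra hfk
    exact hk (Finset.mem_Icc.mpr (hsupp' k hfk))
  have hδz : ∀ k : ℤ, k ∉ Finset.Icc (a - 1) b → (f (k + 1) - f k) ^ 2 = 0 := by
    intro k hk
    rw [Finset.mem_Icc] at hk
    have h1 : f (k + 1) = 0 := by
      by_contra hne
      have := hsupp' _ hne; omega
    have h2 : f k = 0 := by
      by_contra hne
      have := hsupp' _ hne; omega
    rw [h1, h2]; ring
  have hLHS : ∑' k : ℤ, f k ^ 2 = ∑ k ∈ Finset.Icc a b, f k ^ 2 :=
    tsum_eq_sum (fun k hk => by rw [hfz k hk]; ring)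
  have hRHS : ∑' k : ℤ, (f (k + 1) - f k) ^ 2 = ∑ k ∈ Finset.Icc (a - 1) b, (f (k + 1) - f k) ^ 2 :=
    tsum_eq_sum hδz
  set D : ℝ := ∑ k ∈ Finset.Icc (a - 1) b, (f (k + 1) - f k) ^ 2 with hD
  have hDnn : 0 ≤ D := Finset.sum_nonneg (fun _ _ => sq_nonneg _)
  rw [hLHS, hRHS]
  by_cases hab : b < a
  · rw [Finset.Icc_eq_empty (by omega)]
    simp
    positivity
  push_neg at hab
  -- cardinality bound
  have hcard : ((b + 1 - a : ℤ) : ℝ) ≤ 2 * M / t + 1 := by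
    have h1 : ((a : ℤ) : ℝ) ≥ (-M - c) / t := Int.le_ceil _
    have h2 : ((b : ℤ) : ℝ) ≤ (M - c) / t := Int.floor_le _
    have : (M - c) / t - (-M - c) / t = 2 * M / t := by field_simp; ring
    push_cast
    linarith
  have hNnn : (0 : ℝ) ≤ 2 * M / t + 1 := by positivity
  -- pointwise bound
  have hpt : ∀ k ∈ Finset.Icc a b, f k ^ 2 ≤ (2 * M / t + 1) * D := by
    intro k hk
    rw [Finset.mem_Icc] at hk
    have htel : f k = -(∑ j ∈ Finset.Icc k b, (f (j + 1) - f j)) := by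
      rw [sum_telescope_Icc f k b (by omega)]
      have : f (b + 1) = 0 := by
        by_contra hne
        have := hsupp' _ hne; omega
      rw [this]; ring
    have hCS : (∑ j ∈ Finset.Icc k b, (f (j + 1) - f j)) ^ 2 ≤
        (Finset.Icc k b).card * ∑ j ∈ Finset.Icc k b, (f (j + 1) - f j) ^ 2 :=
      sq_sum_le_card_mul_sum_sq
    have hsub : ∑ j ∈ Finset.Icc k b, (f (j + 1) - f j) ^ 2 ≤ D :=
      Finset.sum_le_sum_of_subset_of_nonneg
        (Finset.Icc_subset_Icc (by omega) le_rfl)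
        (fun _ _ _ => sq_nonneg _)
    have hcard2 : ((Finset.Icc k b).card : ℝ) ≤ 2 * M / t + 1 := by
      rw [Int.card_Icc]
      have : ((b + 1 - k).toNat : ℝ) ≤ ((b + 1 - a : ℤ) : ℝ) := by
        have hle : ((b + 1 - k).toNat : ℤ) ≤ b + 1 - a := by omega
        exact_mod_cast hle
      linarith
    calc f k ^ 2 = (∑ j ∈ Finset.Icc k b, (f (j + 1) - f j)) ^ 2 := by rw [htel]; ring
      _ ≤ (Finset.Icc k b).card * ∑ j ∈ Finset.Icc k b, (f (j + 1) - f j) ^ 2 := hCS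
      _ ≤ (2 * M / t + 1) * D := by
          apply mul_le_mul hcard2 hsub (Finset.sum_nonneg (fun _ _ => sq_nonneg _)) hNnn
  calc ∑ k ∈ Finset.Icc a b, f k ^ 2
      ≤ ∑ _k ∈ Finset.Icc a b, (2 * M / t + 1) * D := Finset.sum_le_sum hpt
    _ = (Finset.Icc a b).card * ((2 * M / t + 1) * D) := by rw [Finset.sum_const, nsmul_eq_mul]
    _ ≤ (2 * M / t + 1) * ((2 * M / t + 1) * D) := by
        apply mul_le_mul_of_nonneg_right _ (by positivity)
        rw [Int.card_Icc]
        have : ((b + 1 - a).toNat : ℝ) = ((b + 1 - a : ℤ) : ℝ) := by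
          have : ((b + 1 - a).toNat : ℤ) = b + 1 - a := by omega
          exact_mod_cast this
        rw [this]; exact hcard
    _ = (2 * M / t + 1) ^ 2 * D := by ring

lemma summable_marginal {A B : Type*} (g : A × B → ℝ) (hg : (Function.support g).Finite) :
    Summable (fun a => ∑' b, g (a, b)) := by
  apply summable_of_finite_support
  apply ((hg.image Prod.fst)).subset
  intro a ha
  rw [Function.mem_support] at ha
  have : ∃ b, g (a, b) ≠ 0 := by
    by_contra hc
    push_neg at hc
    exact ha (by simp [hc])
  obtain ⟨b, hb⟩ := this
  exact ⟨(a, b), hb, rfl⟩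

set_option maxHeartbeats 1000000 in
/-- Discrete Poincaré inequality (Lemma 3.1): for grid functions supported in the cube
`[-M,M]^d` one has `q_R(u) ≥ β² (|u|²_{R2} + q_R(u))` with `β > 0` depending only on
`d`, `r` and `M` (independent of `h ∈ (0,1]` and of the offset `v`). -/
theorem discrete_poincare (d : ℕ) (hd : 1 ≤ d) (r : Fin d → ℕ) (hr : ∀ i, 0 < r i)
    (M : ℝ) (hM : 0 < M) :
    ∃ β : ℝ, 0 < β ∧
      ∀ h : ℝ, 0 < h → h ≤ 1 →
        ∀ v : Fin d → ℝ, ∀ u : (Fin d → ℤ) → ℝ,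
          (Function.support u).Finite →
          (∀ m : Fin d → ℤ, ¬ (∀ i, |v i + h * (r i : ℝ) * (m i : ℝ)| ≤ M) → u m = 0) →
          qR d h r u ≥ β ^ 2 * (norm2R d r u + qR d h r u) := by
  have hd0 : 0 < d := hd
  set i0 : Fin d := ⟨0, hd0⟩ with hi0
  set K : ℝ := 2 * M + (r i0 : ℝ) with hK
  have hKpos : 0 < K := by
    have := hr i0
    have : (0 : ℝ) < (r i0 : ℝ) := by exact_mod_cast this
    linarith
  set C : ℝ := K ^ 2 with hC
  have hCpos : 0 < C := by positivity
  refine ⟨Real.sqrt (1 / (1 + C)), Real.sqrt_pos.mpr (by positivity), ?_⟩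
  intro h hh0 hh1 v u hfin hsupp
  have hβ2 : Real.sqrt (1 / (1 + C)) ^ 2 = 1 / (1 + C) :=
    Real.sq_sqrt (by positivity)
  rw [hβ2]
  -- basic positivity
  have hvol : 0 < volR d r := by
    apply Finset.prod_pos
    intro i _
    exact_mod_cast hr i
  -- key: S ≤ C * Q0
  set t : ℝ := (r i0 : ℝ) * h with hts
  have htpos : 0 < t := by
    have : (0 : ℝ) < (r i0 : ℝ) := by exact_mod_cast hr i0
    positivity
  set e : ((Fin d → ℤ) ≃ ℤ × ({ j : Fin d // j ≠ i0 } → ℤ)) :=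
    Equiv.piSplitAt i0 (fun _ => ℤ) with he
  have hsymm_at : ∀ (k : ℤ) (y : { j : Fin d // j ≠ i0 } → ℤ), e.symm (k, y) i0 = k := by
    intro k y
    simp [he, Equiv.piSplitAt_symm_apply]
  have hsymm_add : ∀ (k : ℤ) (y : { j : Fin d // j ≠ i0 } → ℤ),
      e.symm (k, y) + Pi.single i0 1 = e.symm (k + 1, y) := by
    intro k y
    funext j
    by_cases hj : j = i0
    · subst hj
      simp [he, Equiv.piSplitAt_symm_apply]
    · simp [he, Equiv.piSplitAt_symm_apply, hj, Pi.single_eq_of_ne hj]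
  -- summability
  have hsqfin : (Function.support (fun m : Fin d → ℤ => u m ^ 2)).Finite := by
    apply hfin.subset
    intro m hm
    rw [Function.mem_support] at hm ⊢
    intro hz; exact hm (by rw [hz]; ring)
  have hSA : Summable (fun m : Fin d → ℤ => u m ^ 2) := summable_of_finite_support hsqfin
  have hdifffin : (Function.support (fun m : Fin d → ℤ => fdiff d h r u i0 m ^ 2)).Finite := by
    have h1 : (Function.support (fun m : Fin d → ℤ => u (m + Pi.single i0 1))).Finite := by
      apply Set.Finite.preimage _ hfin
      intro x _ y _ hxy
      have := congrArg (fun z => z - Pi.single i0 1) hxy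
      simpa using this
    apply (h1.union hfin).subset
    intro m hm
    rw [Function.mem_support] at hm
    by_contra hc
    simp only [Set.mem_union, Function.mem_support, not_or, not_not] at hc
    apply hm
    simp [fdiff, hc.1, hc.2]
  have hSB : Summable (fun m : Fin d → ℤ => fdiff d h r u i0 m ^ 2) :=
    summable_of_finite_support hdifffin
  -- the per-fiber 1D estimate
  have hfiber : ∀ y : { j : Fin d // j ≠ i0 } → ℤ,
      ∑' k : ℤ, u (e.symm (k, y)) ^ 2 ≤ C * ∑' k : ℤ, fdiff d h r u i0 (e.symm (k, y)) ^ 2 := by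
    intro y
    have h1d := oneD (fun k => u (e.symm (k, y))) (v i0) t M htpos hM ?_
    · have hdiffeq : ∀ k : ℤ, (u (e.symm (k + 1, y)) - u (e.symm (k, y))) ^ 2 =
          t ^ 2 * fdiff d h r u i0 (e.symm (k, y)) ^ 2 := by
        intro k
        rw [← hsymm_add k y]
        rw [fdiff]
        rw [div_pow]
        rw [← hts]
        field_simp
      calc ∑' k : ℤ, u (e.symm (k, y)) ^ 2
          ≤ (2 * M / t + 1) ^ 2 * ∑' k : ℤ, (u (e.symm (k + 1, y)) - u (e.symm (k, y))) ^ 2 := h1d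
        _ = (2 * M / t + 1) ^ 2 * ∑' k : ℤ, t ^ 2 * fdiff d h r u i0 (e.symm (k, y)) ^ 2 := by
            congr 1
            exact tsum_congr (fun k => hdiffeq k)
        _ = ((2 * M / t + 1) * t) ^ 2 * ∑' k : ℤ, fdiff d h r u i0 (e.symm (k, y)) ^ 2 := by
            rw [tsum_mul_left]; ring
        _ ≤ C * ∑' k : ℤ, fdiff d h r u i0 (e.symm (k, y)) ^ 2 := by
            apply mul_le_mul_of_nonneg_right _ (tsum_nonneg (fun _ => sq_nonneg _))
            rw [hC]
            have heq : (2 * M / t + 1) * t = 2 * M + t := by field_simp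
            rw [heq]
            have hle : 2 * M + t ≤ K := by
              rw [hK, hts]
              have hr0 : (0:ℝ) < (r i0 : ℝ) := by exact_mod_cast hr i0
              have : (r i0 : ℝ) * h ≤ (r i0 : ℝ) := by
                nlinarith [hr0]
              linarith
            have hpos : (0 : ℝ) ≤ 2 * M + t := by positivity
            nlinarith
    · intro k hk
      have hm := hsupp (e.symm (k, y))
      by_contra hc
      apply hk
      apply hm
      intro hall
      apply hc
      have := hall i0
      rw [hsymm_at k y] at this
      have heq : v i0 + t * (k : ℝ) = v i0 + h * (r i0 : ℝ) * (k : ℝ) := by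
        rw [hts]; ring
      rw [heq]
      exact this
  -- put fibers together
  set e2 : ((Fin d → ℤ) ≃ ({ j : Fin d // j ≠ i0 } → ℤ) × ℤ) :=
    e.trans (Equiv.prodComm _ _) with he2
  have he2symm : ∀ (y : { j : Fin d // j ≠ i0 } → ℤ) (k : ℤ), e2.symm (y, k) = e.symm (k, y) := by
    intro y k; rfl
  have hSA' : Summable (fun p : ({ j : Fin d // j ≠ i0 } → ℤ) × ℤ => u (e2.symm p) ^ 2) :=
    e2.symm.summable_iff.mpr hSA
  have hSB' : Summable (fun p : ({ j : Fin d // j ≠ i0 } → ℤ) × ℤ =>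
      fdiff d h r u i0 (e2.symm p) ^ 2) :=
    e2.symm.summable_iff.mpr hSB
  have hS : ∑' m : Fin d → ℤ, u m ^ 2 ≤ C * ∑' m : Fin d → ℤ, fdiff d h r u i0 m ^ 2 := by
    have e1 : ∑' m : Fin d → ℤ, u m ^ 2 = ∑' (y) (k : ℤ), u (e.symm (k, y)) ^ 2 := by
      rw [← e2.symm.tsum_eq (fun m => u m ^ 2)]
      rw [Summable.tsum_prod hSA']
      exact tsum_congr fun y => tsum_congr fun k => by rw [he2symm]
    have e2eq : ∑' m : Fin d → ℤ, fdiff d h r u i0 m ^ 2 =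
        ∑' (y) (k : ℤ), fdiff d h r u i0 (e.symm (k, y)) ^ 2 := by
      rw [← e2.symm.tsum_eq (fun m => fdiff d h r u i0 m ^ 2)]
      rw [Summable.tsum_prod hSB']
      exact tsum_congr fun y => tsum_congr fun k => by rw [he2symm]
    rw [e1, e2eq, ← tsum_mul_left]
    apply Summable.tsum_le_tsum
    · intro y
      exact hfiber y
    · have := hSA'.prod
      refine this.congr fun y => ?_
      exact tsum_congr fun k => by rw [he2symm]
    · apply Summable.mul_left
      have := hSB'.prod
      refine this.congr fun y => ?_
      exact tsum_congr fun k => by rw [he2symm]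
  -- Q0 ≤ sum over i
  have hQ0 : ∑' m : Fin d → ℤ, fdiff d h r u i0 m ^ 2 ≤
      ∑ i : Fin d, ∑' m : Fin d → ℤ, fdiff d h r u i m ^ 2 := by
    apply Finset.single_le_sum (f := fun i => ∑' m : Fin d → ℤ, fdiff d h r u i m ^ 2)
      (fun i _ => tsum_nonneg (fun _ => sq_nonneg _)) (Finset.mem_univ i0)
  -- conclude
  have hNq : norm2R d r u ≤ C * qR d h r u := by
    rw [norm2R, qR]
    calc volR d r * ∑' m : Fin d → ℤ, u m ^ 2
        ≤ volR d r * (C * ∑' m : Fin d → ℤ, fdiff d h r u i0 m ^ 2) :=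
          mul_le_mul_of_nonneg_left hS hvol.le
      _ ≤ volR d r * (C * ∑ i : Fin d, ∑' m : Fin d → ℤ, fdiff d h r u i m ^ 2) := by
          apply mul_le_mul_of_nonneg_left _ hvol.le
          exact mul_le_mul_of_nonneg_left hQ0 hCpos.le
      _ = C * (volR d r * ∑ i : Fin d, ∑' m : Fin d → ℤ, fdiff d h r u i m ^ 2) := by ring
  have hqnn : 0 ≤ qR d h r u := by
    rw [qR]
    apply mul_nonneg hvol.le
    exact Finset.sum_nonneg fun i _ => tsum_nonneg fun _ => sq_nonneg _
  rw [ge_iff_le]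
  have h1C : (0 : ℝ) < 1 + C := by linarith
  calc 1 / (1 + C) * (norm2R d r u + qR d h r u)
      ≤ 1 / (1 + C) * (C * qR d h r u + qR d h r u) := by
        apply mul_le_mul_of_nonneg_left _ (by positivity)
        linarith
    _ = qR d h r u := by field_simp; ring
end
end

section
/- The bounded linear operator S on ℓ²(ℤ, ℂ) defined by (S u)_k = (2/3) u_k + (1/6)(u_{k+1} + u_{k−1}) is self-adjoint and its spectrum is exactly the real interval [1/3, 1] (viewed as a subset of ℂ). -/
open MeasureTheory Complex ENNReal

noncomputable section

namespace ToeplitzAux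

abbrev H := lp (fun _ : ℤ => ℂ) 2

lemma two_toReal : (2 : ℝ≥0∞).toReal = 2 := by norm_num

lemma memℓp_shift (m : ℤ) (f : H) : Memℓp (fun k => (f : ℤ → ℂ) (k + m)) 2 := by
  apply memℓp_gen
  have h := (lp.memℓp f).summable (p := 2) (by norm_num)
  have : (fun k : ℤ => ‖(f : ℤ → ℂ) (k + m)‖ ^ (2 : ℝ≥0∞).toReal)
      = (fun k : ℤ => ‖(f : ℤ → ℂ) k‖ ^ (2 : ℝ≥0∞).toReal) ∘ (Equiv.addRight m) := rfl
  rw [this, (Equiv.addRight m).summable_iff]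
  exact h

def shiftLM (m : ℤ) : H →ₗ[ℂ] H where
  toFun f := ⟨fun k => (f : ℤ → ℂ) (k + m), memℓp_shift m f⟩
  map_add' f g := by apply lp.ext; funext k; simp [lp.coeFn_add]; rfl
  map_smul' c f := by apply lp.ext; funext k; simp [lp.coeFn_smul]

lemma shiftLM_apply (m : ℤ) (f : H) (k : ℤ) : (shiftLM m f : ℤ → ℂ) k = (f : ℤ → ℂ) (k + m) := rfl

lemma norm_shiftLM (m : ℤ) (f : H) : ‖shiftLM m f‖ = ‖f‖ := by
  have h2 : 0 < (2 : ℝ≥0∞).toReal := by norm_num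
  rw [lp.norm_eq_tsum_rpow h2, lp.norm_eq_tsum_rpow h2]
  congr 1
  exact (Equiv.addRight m).tsum_eq (fun k => ‖(f : ℤ → ℂ) k‖ ^ (2 : ℝ≥0∞).toReal)

def shift (m : ℤ) : H →L[ℂ] H :=
  (shiftLM m).mkContinuous 1 (fun f => by rw [norm_shiftLM, one_mul])

lemma shift_apply (m : ℤ) (f : H) (k : ℤ) : (shift m f : ℤ → ℂ) k = (f : ℤ → ℂ) (k + m) := rfl

end ToeplitzAux

namespace ToeplitzAux

open scoped InnerProductSpace

lemma shift_mul_shift (m : ℤ) : (shift m) * (shift (-m)) = 1 := by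
  refine ContinuousLinearMap.ext fun f => lp.ext (funext fun k => ?_)
  show (shift m (shift (-m) f) : ℤ → ℂ) k = (f : ℤ → ℂ) k
  rw [shift_apply, shift_apply, add_neg_cancel_right]

lemma adjoint_shift (m : ℤ) : ContinuousLinearMap.adjoint (shift m) = shift (-m) := by
  symm
  rw [ContinuousLinearMap.eq_adjoint_iff]
  intro x y
  rw [lp.inner_eq_tsum, lp.inner_eq_tsum]
  have := (Equiv.addRight (-m)).tsum_eq
    (fun k : ℤ => (inner ℂ ((x : ℤ → ℂ) k) ((y : ℤ → ℂ) (k + m)) : ℂ))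
  refine Eq.trans ?_ this
  congr 1
  funext k
  simp only [Equiv.coe_addRight, shift_apply, neg_add_cancel_right]

end ToeplitzAux

namespace ToeplitzAux

lemma S_eq {S : H →L[ℂ] H}
    (hS : ∀ u : H, ∀ k : ℤ, (S u : ℤ → ℂ) k =
        (2 / 3 : ℂ) * (u : ℤ → ℂ) k +
          (1 / 6 : ℂ) * ((u : ℤ → ℂ) (k + 1) + (u : ℤ → ℂ) (k - 1))) :
    S = (2/3 : ℂ) • 1 + (1/6 : ℂ) • shift 1 + (1/6 : ℂ) • shift (-1) := by
  refine ContinuousLinearMap.ext fun u => lp.ext (funext fun k => ?_)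
  show (S u : ℤ → ℂ) k = (((2/3 : ℂ) • 1 + (1/6 : ℂ) • shift 1 + (1/6 : ℂ) • shift (-1)) u : ℤ → ℂ) k
  rw [hS u k]
  simp only [ContinuousLinearMap.add_apply, ContinuousLinearMap.smul_apply,
    ContinuousLinearMap.one_apply, lp.coeFn_add, lp.coeFn_smul, Pi.add_apply, Pi.smul_apply,
    shift_apply, smul_eq_mul, sub_eq_add_neg]
  ring

lemma S_selfAdjoint {S : H →L[ℂ] H}
    (hSeq : S = (2/3 : ℂ) • 1 + (1/6 : ℂ) • shift 1 + (1/6 : ℂ) • shift (-1)) :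
    IsSelfAdjoint S := by
  rw [IsSelfAdjoint, hSeq]
  have ha : star (shift 1) = shift (-1) := by
    rw [ContinuousLinearMap.star_eq_adjoint, adjoint_shift]
  have hb : star (shift (-1)) = shift 1 := by
    rw [ContinuousLinearMap.star_eq_adjoint, adjoint_shift, neg_neg]
  have h1 : star (2/3 : ℂ) = 2/3 := by
    norm_num [Complex.ext_iff, Complex.conj_re, Complex.conj_im]
  have h2 : star (1/6 : ℂ) = 1/6 := by
    norm_num [Complex.ext_iff, Complex.conj_re, Complex.conj_im]
  rw [star_add, star_add, star_smul, star_smul, star_smul, star_one, ha, hb, h1, h2]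
  abel

end ToeplitzAux

namespace ToeplitzAux

lemma expand_plus : ((1 : H →L[ℂ] H) + shift (-1)) * (1 + shift 1)
    = 1 + 1 + shift 1 + shift (-1) := by
  have key : shift (-1) * shift 1 = 1 := by simpa using shift_mul_shift (-1)
  simp only [mul_add, add_mul, mul_one, one_mul, key]
  abel

lemma expand_minus : ((1 : H →L[ℂ] H) - shift (-1)) * (1 - shift 1)
    = 1 + 1 - shift 1 - shift (-1) := by
  have key : shift (-1) * shift 1 = 1 := by simpa using shift_mul_shift (-1)
  simp only [sub_mul, mul_sub, mul_one, one_mul, key]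
  abel

lemma star_plus : star ((1 : H →L[ℂ] H) + shift 1) = 1 + shift (-1) := by
  rw [star_add, star_one, ContinuousLinearMap.star_eq_adjoint, adjoint_shift]

lemma star_minus : star ((1 : H →L[ℂ] H) - shift 1) = 1 - shift (-1) := by
  rw [star_sub, star_one, ContinuousLinearMap.star_eq_adjoint, adjoint_shift]

lemma spec_subset {S : H →L[ℂ] H}
    (hSeq : S = (2/3 : ℂ) • 1 + (1/6 : ℂ) • shift 1 + (1/6 : ℂ) • shift (-1))
    {μ : ℝ} (hμ : (μ : ℂ) ∈ spectrum ℂ S) : μ ∈ Set.Icc (1/3 : ℝ) 1 := by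
  have h6 : ((6 : ℂ) * μ : ℂ) ∈ spectrum ℂ ((6 : ℂ) • S) := by
    have hu := spectrum.unit_smul_eq_smul S (Units.mk0 (6:ℂ) (by norm_num))
    have he : (6 : ℂ) • S = (Units.mk0 (6:ℂ) (by norm_num)) • S := rfl
    rw [he, hu]
    exact ⟨(μ : ℂ), hμ, by simp [Units.smul_def]⟩
  have hone : (1 : H →L[ℂ] H) + 1 = algebraMap ℂ _ 2 := by
    rw [map_ofNat]; exact one_add_one_eq_two
  -- lower bound
  have hb : star ((1 : H →L[ℂ] H) + shift 1) * (1 + shift 1)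
      = (6:ℂ) • S - algebraMap ℂ _ 2 := by
    rw [star_plus, expand_plus, hSeq, ← hone]
    module
  have hlow : ((6 * μ - 2 : ℝ) : ℂ) ∈ spectrum ℂ
      (star ((1 : H →L[ℂ] H) + shift 1) * (1 + shift 1)) := by
    rw [hb, ← spectrum.sub_singleton_eq]
    have : ((6 * μ - 2 : ℝ) : ℂ) = (6 : ℂ) * μ - 2 := by push_cast; ring
    rw [this]
    exact Set.sub_mem_sub h6 rfl
  have hlow' : (0 : ℝ) ≤ 6 * μ - 2 :=
    spectrum_star_mul_self_nonneg _ (spectrum.of_algebraMap_mem ℂ hlow)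
  -- upper bound
  have hc : star ((1 : H →L[ℂ] H) - shift 1) * (1 - shift 1)
      = algebraMap ℂ _ 6 - (6:ℂ) • S := by
    rw [star_minus, expand_minus, hSeq]
    have h6' : algebraMap ℂ (H →L[ℂ] H) 6 = (6:ℂ) • 1 := by
      rw [Algebra.algebraMap_eq_smul_one]
    rw [h6']
    module
  have hupp : ((6 - 6 * μ : ℝ) : ℂ) ∈ spectrum ℂ
      (star ((1 : H →L[ℂ] H) - shift 1) * (1 - shift 1)) := by
    rw [hc, ← spectrum.singleton_sub_eq]
    have : ((6 - 6 * μ : ℝ) : ℂ) = (6 : ℂ) - 6 * μ := by push_cast; ring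
    rw [this]
    exact Set.sub_mem_sub rfl h6
  have hupp' : (0 : ℝ) ≤ 6 - 6 * μ :=
    spectrum_star_mul_self_nonneg _ (spectrum.of_algebraMap_mem ℂ hupp)
  constructor <;> linarith

end ToeplitzAux

namespace ToeplitzAux

def trig (θ : ℝ) (k : ℤ) : ℂ := Complex.exp (((θ * k : ℝ) : ℂ) * Complex.I)

lemma norm_trig (θ : ℝ) (k : ℤ) : ‖trig θ k‖ = 1 := by
  rw [trig, Complex.norm_exp_ofReal_mul_I]

lemma trig_rec (θ : ℝ) (k : ℤ) :
    trig θ (k + 1) + trig θ (k - 1) = 2 * (Real.cos θ : ℂ) * trig θ k := by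
  have h1 : ((θ * ((k + 1 : ℤ) : ℝ) : ℝ) : ℂ) * Complex.I
      = ((θ * k : ℝ) : ℂ) * Complex.I + (θ:ℂ) * Complex.I := by push_cast; ring
  have h2 : ((θ * ((k - 1 : ℤ) : ℝ) : ℝ) : ℂ) * Complex.I
      = ((θ * k : ℝ) : ℂ) * Complex.I + (-θ:ℂ) * Complex.I := by push_cast; ring
  rw [trig, trig, trig, h1, h2, Complex.exp_add, Complex.exp_add]
  simp only [Complex.exp_mul_I, Complex.cos_neg, Complex.sin_neg, Complex.ofReal_cos]
  ring

def uraw (θ : ℝ) (n : ℕ) : ℤ → ℂ :=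
  fun j => if j ∈ Finset.Icc (-(n:ℤ)) n then trig θ j else 0

lemma norm_uraw_le (θ : ℝ) (n : ℕ) (j : ℤ) : ‖uraw θ n j‖ ≤ 1 := by
  unfold uraw
  split
  · exact le_of_eq (norm_trig θ j)
  · simp

lemma memℓp_uraw (θ : ℝ) (n : ℕ) : Memℓp (uraw θ n) 2 := by
  refine (memℓp_zero ?_).of_exponent_ge (by norm_num)
  refine Set.Finite.subset (Finset.Icc (-(n:ℤ)) n).finite_toSet fun j hj => ?_
  by_contra hmem
  have : j ∉ Finset.Icc (-(n:ℤ)) n := by simpa using hmem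
  exact hj (by simp only [uraw]; rw [if_neg this])

def uvec (θ : ℝ) (n : ℕ) : H := ⟨uraw θ n, memℓp_uraw θ n⟩

lemma uvec_apply (θ : ℝ) (n : ℕ) (j : ℤ) : (uvec θ n : ℤ → ℂ) j = uraw θ n j := rfl

lemma norm_sq_uvec (θ : ℝ) (n : ℕ) : ‖uvec θ n‖ ^ (2:ℝ) = 2 * n + 1 := by
  have h2 : (0:ℝ) < (2 : ℝ≥0∞).toReal := by norm_num
  have h := lp.norm_rpow_eq_tsum h2 (uvec θ n)
  rw [two_toReal] at h
  rw [h, tsum_eq_sum (s := Finset.Icc (-(n:ℤ)) n)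
    (fun j hj => by
      rw [uvec_apply]; simp only [uraw]; rw [if_neg hj, norm_zero,
        Real.zero_rpow (by norm_num : (2:ℝ) ≠ 0)])]
  have hterm : ∀ j ∈ Finset.Icc (-(n:ℤ)) n,
      ‖(uvec θ n : ℤ → ℂ) j‖ ^ (2:ℝ) = 1 := by
    intro j hj
    rw [uvec_apply]
    simp only [uraw]
    rw [if_pos hj, norm_trig, Real.one_rpow]
  rw [Finset.sum_congr rfl hterm, Finset.sum_const, nsmul_eq_mul, mul_one, Int.card_Icc]
  have h4 : ((n:ℤ) + 1 - -(n:ℤ)).toNat = 2*n+1 := by omega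
  rw [h4]
  push_cast
  ring

end ToeplitzAux

namespace ToeplitzAux

section resid

variable {S : H →L[ℂ] H}
  (hS : ∀ u : H, ∀ k : ℤ, (S u : ℤ → ℂ) k =
      (2 / 3 : ℂ) * (u : ℤ → ℂ) k +
        (1 / 6 : ℂ) * ((u : ℤ → ℂ) (k + 1) + (u : ℤ → ℂ) (k - 1)))

include hS

lemma resid_coord (c : ℝ) (u : H) (j : ℤ) :
    ((algebraMap ℂ (H →L[ℂ] H) ((2/3 + c/3 : ℝ) : ℂ) - S) u : ℤ → ℂ) j
      = ((c : ℂ)/3) * (u : ℤ → ℂ) j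
        - (1/6 : ℂ) * ((u : ℤ → ℂ) (j+1) + (u : ℤ → ℂ) (j-1)) := by
  rw [ContinuousLinearMap.sub_apply, lp.coeFn_sub, Pi.sub_apply,
    Algebra.algebraMap_eq_smul_one, ContinuousLinearMap.smul_apply,
    ContinuousLinearMap.one_apply, lp.coeFn_smul, Pi.smul_apply, hS u j, smul_eq_mul]
  push_cast
  ring

lemma resid_zero (c θ : ℝ) (hcos : Real.cos θ = c) (n : ℕ) (j : ℤ)
    (hj : j ∉ ({-(n:ℤ)-1, -(n:ℤ), (n:ℤ), (n:ℤ)+1} : Finset ℤ)) :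
    ((algebraMap ℂ (H →L[ℂ] H) ((2/3 + c/3 : ℝ) : ℂ) - S) (uvec θ n) : ℤ → ℂ) j = 0 := by
  rw [resid_coord hS, uvec_apply, uvec_apply, uvec_apply]
  simp only [Finset.mem_insert, Finset.mem_singleton, not_or] at hj
  rcases le_or_gt j (-(n:ℤ)-1) with h1 | h1
  · have e0 : uraw θ n j = 0 := by
      simp only [uraw]; rw [if_neg (by rw [Finset.mem_Icc]; omega)]
    have e1 : uraw θ n (j+1) = 0 := by
      simp only [uraw]; rw [if_neg (by rw [Finset.mem_Icc]; omega)]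
    have e2 : uraw θ n (j-1) = 0 := by
      simp only [uraw]; rw [if_neg (by rw [Finset.mem_Icc]; omega)]
    rw [e0, e1, e2]; ring
  rcases le_or_gt ((n:ℤ)+1) j with h2 | h2
  · have e0 : uraw θ n j = 0 := by
      simp only [uraw]; rw [if_neg (by rw [Finset.mem_Icc]; omega)]
    have e1 : uraw θ n (j+1) = 0 := by
      simp only [uraw]; rw [if_neg (by rw [Finset.mem_Icc]; omega)]
    have e2 : uraw θ n (j-1) = 0 := by
      simp only [uraw]; rw [if_neg (by rw [Finset.mem_Icc]; omega)]
    rw [e0, e1, e2]; ring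
  · -- interior
    have e0 : uraw θ n j = trig θ j := by
      simp only [uraw]; rw [if_pos (by rw [Finset.mem_Icc]; omega)]
    have e1 : uraw θ n (j+1) = trig θ (j+1) := by
      simp only [uraw]; rw [if_pos (by rw [Finset.mem_Icc]; omega)]
    have e2 : uraw θ n (j-1) = trig θ (j-1) := by
      simp only [uraw]; rw [if_pos (by rw [Finset.mem_Icc]; omega)]
    rw [e0, e1, e2, trig_rec, hcos]
    ring

lemma resid_bound (c θ : ℝ) (hc : |c| ≤ 1) (n : ℕ) (j : ℤ) :
    ‖((algebraMap ℂ (H →L[ℂ] H) ((2/3 + c/3 : ℝ) : ℂ) - S) (uvec θ n) : ℤ → ℂ) j‖ ≤ 1 := by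
  rw [resid_coord hS, uvec_apply, uvec_apply, uvec_apply]
  have h0 := norm_uraw_le θ n j
  have h1 := norm_uraw_le θ n (j+1)
  have h2 := norm_uraw_le θ n (j-1)
  calc ‖((c : ℂ)/3) * uraw θ n j - (1/6 : ℂ) * (uraw θ n (j+1) + uraw θ n (j-1))‖
      ≤ ‖((c : ℂ)/3) * uraw θ n j‖ + ‖(1/6 : ℂ) * (uraw θ n (j+1) + uraw θ n (j-1))‖ :=
        norm_sub_le _ _
    _ ≤ ‖((c : ℂ)/3)‖ * 1 + ‖(1/6 : ℂ)‖ * (‖uraw θ n (j+1)‖ + ‖uraw θ n (j-1)‖) := by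
        rw [norm_mul, norm_mul]
        gcongr
        exact norm_add_le _ _
    _ ≤ (1/3) * 1 + (1/6) * (1 + 1) := by
        have : ‖((c : ℂ)/3)‖ = |c|/3 := by
          rw [norm_div]
          simp [Complex.norm_real]
        gcongr
        · rw [this]; linarith
        · simp
    _ ≤ 1 := by norm_num

end resid

end ToeplitzAux

namespace ToeplitzAux

lemma resid_norm_le {S : H →L[ℂ] H}
    (hS : ∀ u : H, ∀ k : ℤ, (S u : ℤ → ℂ) k =
        (2 / 3 : ℂ) * (u : ℤ → ℂ) k +
          (1 / 6 : ℂ) * ((u : ℤ → ℂ) (k + 1) + (u : ℤ → ℂ) (k - 1)))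
    (c θ : ℝ) (hcos : Real.cos θ = c) (hc : |c| ≤ 1) (n : ℕ) :
    ‖(algebraMap ℂ (H →L[ℂ] H) ((2/3 + c/3 : ℝ) : ℂ) - S) (uvec θ n)‖ ≤ 2 := by
  set v := (algebraMap ℂ (H →L[ℂ] H) ((2/3 + c/3 : ℝ) : ℂ) - S) (uvec θ n) with hv
  have h2 : (0:ℝ) < (2 : ℝ≥0∞).toReal := by norm_num
  have hsq := lp.norm_rpow_eq_tsum h2 v
  rw [two_toReal] at hsq
  set s : Finset ℤ := {-(n:ℤ)-1, -(n:ℤ), (n:ℤ), (n:ℤ)+1} with hs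
  have hts : ∑' j, ‖(v : ℤ → ℂ) j‖ ^ (2:ℝ) = ∑ j ∈ s, ‖(v : ℤ → ℂ) j‖ ^ (2:ℝ) := by
    refine tsum_eq_sum fun j hj => ?_
    rw [hv, resid_zero hS c θ hcos n j hj, norm_zero,
      Real.zero_rpow (by norm_num : (2:ℝ) ≠ 0)]
  have hbound : ∑ j ∈ s, ‖(v : ℤ → ℂ) j‖ ^ (2:ℝ) ≤ 4 := by
    have hterm : ∀ j ∈ s, ‖(v : ℤ → ℂ) j‖ ^ (2:ℝ) ≤ 1 := by
      intro j _
      have hb := resid_bound hS c θ hc n j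
      rw [← hv] at hb
      calc ‖(v : ℤ → ℂ) j‖ ^ (2:ℝ) ≤ (1:ℝ) ^ (2:ℝ) :=
            Real.rpow_le_rpow (norm_nonneg _) hb (by norm_num)
        _ = 1 := Real.one_rpow _
    calc ∑ j ∈ s, ‖(v : ℤ → ℂ) j‖ ^ (2:ℝ) ≤ ∑ _j ∈ s, (1:ℝ) := Finset.sum_le_sum hterm
      _ = s.card := by rw [Finset.sum_const, nsmul_eq_mul, mul_one]
      _ ≤ 4 := by
          have : s.card ≤ 4 := by
            rw [hs]
            apply le_trans (Finset.card_insert_le _ _)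
            simp only [Nat.succ_le_succ_iff]
            apply le_trans (Finset.card_insert_le _ _)
            simp only [Nat.succ_le_succ_iff]
            apply le_trans (Finset.card_insert_le _ _)
            simp [Finset.card_singleton]
          exact_mod_cast this
  have hfin : ‖v‖ ^ (2:ℝ) ≤ 4 := by rw [hsq, hts] at *; exact hbound
  have hvn : (0:ℝ) ≤ ‖v‖ := norm_nonneg _
  have hpow : ‖v‖ ^ (2:ℕ) ≤ 4 := by rw [← Real.rpow_two]; exact hfin
  refine le_of_pow_le_pow_left₀ (n := 2) (by norm_num) (by norm_num) ?_
  calc ‖v‖ ^ 2 ≤ 4 := hpow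
    _ = 2 ^ 2 := by norm_num

lemma mem_spectrum_of {S : H →L[ℂ] H}
    (hS : ∀ u : H, ∀ k : ℤ, (S u : ℤ → ℂ) k =
        (2 / 3 : ℂ) * (u : ℤ → ℂ) k +
          (1 / 6 : ℂ) * ((u : ℤ → ℂ) (k + 1) + (u : ℤ → ℂ) (k - 1)))
    {t : ℝ} (ht : t ∈ Set.Icc (1/3 : ℝ) 1) : (t : ℂ) ∈ spectrum ℂ S := by
  obtain ⟨ht1, ht2⟩ := ht
  set c : ℝ := 3*t - 2 with hcdef
  have hc : |c| ≤ 1 := abs_le.2 ⟨by linarith, by linarith⟩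
  have hc' := abs_le.1 hc
  set θ : ℝ := Real.arccos c with hθ
  have hcos : Real.cos θ = c := Real.cos_arccos hc'.1 hc'.2
  have htc : ((t : ℝ) : ℂ) = ((2/3 + c/3 : ℝ) : ℂ) := by
    rw [hcdef]; push_cast; ring
  by_contra hns
  rw [spectrum.mem_iff, not_not] at hns
  set D := algebraMap ℂ (H →L[ℂ] H) (t : ℂ) - S with hD
  obtain ⟨w, hw⟩ := hns
  have hinv : ∀ x : H, (↑w⁻¹ : H →L[ℂ] H) (D x) = x := by
    intro x
    have : (↑w⁻¹ * ↑w : H →L[ℂ] H) x = x := by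
      rw [w.inv_mul]; rfl
    rwa [hw] at this
  set M : ℝ := ‖(↑w⁻¹ : H →L[ℂ] H)‖ * 2 with hM
  have hM0 : 0 ≤ M := by positivity
  have key : ∀ n : ℕ, (2 * n + 1 : ℝ) ≤ M ^ 2 := by
    intro n
    have h1 : ‖uvec θ n‖ = ‖(↑w⁻¹ : H →L[ℂ] H) (D (uvec θ n))‖ := by rw [hinv]
    have h2 : ‖(↑w⁻¹ : H →L[ℂ] H) (D (uvec θ n))‖
        ≤ ‖(↑w⁻¹ : H →L[ℂ] H)‖ * ‖D (uvec θ n)‖ := ContinuousLinearMap.le_opNorm _ _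
    have h3 : ‖D (uvec θ n)‖ ≤ 2 := by
      rw [hD, htc]
      exact resid_norm_le hS c θ hcos hc n
    have h4 : ‖uvec θ n‖ ≤ M := by
      rw [hM]
      calc ‖uvec θ n‖ ≤ ‖(↑w⁻¹ : H →L[ℂ] H)‖ * ‖D (uvec θ n)‖ := h1 ▸ h2
        _ ≤ ‖(↑w⁻¹ : H →L[ℂ] H)‖ * 2 := by gcongr
    have h5 : ‖uvec θ n‖ ^ (2:ℝ) ≤ M ^ (2:ℝ) :=
      Real.rpow_le_rpow (norm_nonneg _) h4 (by norm_num)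
    rw [norm_sq_uvec, Real.rpow_two] at h5
    exact h5
  have := key (⌈M ^ 2⌉₊)
  have hceil : M ^ 2 ≤ (⌈M ^ 2⌉₊ : ℝ) := Nat.le_ceil _
  linarith

end ToeplitzAux

end

noncomputable section

open MeasureTheory

/-- The symmetric tridiagonal Toeplitz operator `(S u)_k = (2/3) u_k + (1/6)(u_{k+1} + u_{k-1})`
on `ℓ²(ℤ, ℂ)` is self-adjoint and its spectrum is exactly the real interval `[1/3, 1]`. -/
theorem toeplitz_selfAdjoint_spectrum
    (S : lp (fun _ : ℤ => ℂ) 2 →L[ℂ] lp (fun _ : ℤ => ℂ) 2)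
    (hS : ∀ u : lp (fun _ : ℤ => ℂ) 2, ∀ k : ℤ,
      (S u : ℤ → ℂ) k =
        (2 / 3 : ℂ) * (u : ℤ → ℂ) k +
          (1 / 6 : ℂ) * ((u : ℤ → ℂ) (k + 1) + (u : ℤ → ℂ) (k - 1))) :
    IsSelfAdjoint S ∧
      spectrum ℂ S = Complex.ofReal '' Set.Icc (1 / 3 : ℝ) 1 := by
  have hSeq := ToeplitzAux.S_eq hS
  have hsa := ToeplitzAux.S_selfAdjoint hSeq
  refine ⟨hsa, ?_⟩
  ext z
  constructor
  · intro hz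
    have hre : z = z.re := hsa.mem_spectrum_eq_re hz
    exact ⟨z.re, ToeplitzAux.spec_subset hSeq (by rw [← hre]; exact hz), hre.symm⟩
  · rintro ⟨t, ht, rfl⟩
    exact ToeplitzAux.mem_spectrum_of hS ht

end
end

section
/- Lemma 3.4: For every square-summable grid function u : ℤ^d → ℝ, the hat-function imbedding u(n) = Σ_m u_m ψ_m satisfies 3^{−d} · h^d |u|²_{R2} ≤ ‖u(n)‖²_{L²(ℝ^d)} ≤ h^d |u|²_{R2}; that is, the conclusion of the lemma holds with σ² = 1 − 3^{−d} ∈ (0,1), uniformly in h and in the offset v. -/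
open MeasureTheory

noncomputable section

/-- The canonical hat function on `ℝ`, centered at the origin with support `[-1,1]`. -/
def hat (t : ℝ) : ℝ := max 0 (1 - |t|)

/-- The `i`-th coordinate of the grid-knot `x_m = v + h * r * m` of the grid `G_n(R)`. -/
def gridKnot (d : ℕ) (h : ℝ) (r : Fin d → ℕ) (v : Fin d → ℝ) (m : Fin d → ℤ) (i : Fin d) : ℝ :=
  v i + h * (r i : ℝ) * (m i : ℝ)

/-- The `d`-dimensional hat function centered at the grid-knot `x_m`. -/
def psi (d : ℕ) (h : ℝ) (r : Fin d → ℕ) (v : Fin d → ℝ) (m : Fin d → ℤ) (x : Fin d → ℝ) : ℝ :=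
  ∏ i, hat ((x i - gridKnot d h r v m i) / (h * (r i : ℝ)))

/-- The hat-function imbedding `u(n) = Σ_m u_m ψ_m` of a grid function. -/
def imbed (d : ℕ) (h : ℝ) (r : Fin d → ℕ) (v : Fin d → ℝ) (u : (Fin d → ℤ) → ℝ)
    (x : Fin d → ℝ) : ℝ :=
  ∑' m : Fin d → ℤ, u m * psi d h r v m x

lemma hat_nonneg (t : ℝ) : 0 ≤ hat t := le_max_left _ _

lemma hat_eq_zero {t : ℝ} (h : 1 ≤ |t|) : hat t = 0 := max_eq_left (by linarith)

lemma abs_lt_one_of_hat_ne_zero {t : ℝ} (h : hat t ≠ 0) : |t| < 1 := by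
  by_contra h'; exact h (hat_eq_zero (not_lt.1 h'))

lemma continuous_hat : Continuous hat := by
  unfold hat; fun_prop

def Khat (k : ℤ) : ℝ := if k = 0 then 2/3 else if k = 1 ∨ k = -1 then 1/6 else 0

lemma hasDerivAt_cubic (a b c y : ℝ) :
    HasDerivAt (fun y : ℝ => a*y + b*y^2 + c*y^3) (a + 2*b*y + 3*c*y^2) y := by
  have ha : HasDerivAt (fun y : ℝ => a*y) a y := by
    simpa using (hasDerivAt_id y).const_mul a
  have hb : HasDerivAt (fun y : ℝ => b*y^2) (b*(2*y^1)) y := by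
    simpa using (hasDerivAt_pow 2 y).const_mul b
  have hc : HasDerivAt (fun y : ℝ => c*y^3) (c*(3*y^2)) y := by
    simpa using (hasDerivAt_pow 3 y).const_mul c
  exact ((ha.add hb).add hc).congr_deriv (by ring)

lemma poly_piece (a b A B C : ℝ) (f : ℝ → ℝ) (hab : a ≤ b)
    (hf : ∀ y ∈ Set.Icc a b, f y = A + 2*B*y + 3*C*y^2) (hcont : Continuous f) :
    ∫ y in a..b, f y = (A*b + B*b^2 + C*b^3) - (A*a + B*a^2 + C*a^3) := by
  have H : ∀ y ∈ Set.uIcc a b, HasDerivAt (fun y : ℝ => A*y + B*y^2 + C*y^3) (f y) y := by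
    intro y hy
    rw [Set.uIcc_of_le hab] at hy
    rw [hf y hy]
    exact hasDerivAt_cubic A B C y
  rw [intervalIntegral.integral_eq_sub_of_hasDerivAt H (hcont.intervalIntegrable _ _)]

lemma integral_hat_hat (k : ℤ) : ∫ y : ℝ, hat y * hat (y - (k:ℝ)) = Khat k := by
  have hcont : Continuous fun y : ℝ => hat y * hat (y - (k:ℝ)) :=
    continuous_hat.mul (continuous_hat.comp (continuous_id.sub continuous_const))
  by_cases h0 : k = 0
  · subst h0
    simp only [Int.cast_zero, sub_zero]
    have hsupp : ∀ y : ℝ, y ∉ Set.Ioc (-1:ℝ) 1 → hat y * hat y = 0 := by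
      intro y hy
      simp only [Set.mem_Ioc, not_and_or, not_lt, not_le] at hy
      have h1y : 1 ≤ |y| := by
        rcases hy with hy | hy
        · rw [abs_of_nonpos (by linarith)]; linarith
        · rw [abs_of_pos (by linarith)]; linarith
      rw [hat_eq_zero h1y, zero_mul]
    rw [← MeasureTheory.setIntegral_eq_integral_of_forall_compl_eq_zero hsupp]
    rw [← intervalIntegral.integral_of_le (by norm_num : (-1:ℝ) ≤ 1)]
    rw [← intervalIntegral.integral_add_adjacent_intervals (f := fun y : ℝ => hat y * hat y) (a := (-1:ℝ)) (b := 0) (c := 1)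
      ((continuous_hat.mul continuous_hat).intervalIntegrable _ _)
      ((continuous_hat.mul continuous_hat).intervalIntegrable _ _)]
    have e1 : (∫ y in (-1:ℝ)..0, hat y * hat y) = 1/3 := by
      rw [intervalIntegral.integral_congr (g := fun y : ℝ => (1+y)*(1+y))
        (by
          intro y hy
          rw [Set.uIcc_of_le (by norm_num : (-1:ℝ) ≤ 0)] at hy
          obtain ⟨h1, h2⟩ := hy
          simp only [hat]
          rw [abs_of_nonpos h2, max_eq_right (by linarith)]
          ring)]
      rw [poly_piece (-1) 0 1 1 (1/3) _ (by norm_num) (fun y _ => by ring)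
        (by continuity)]
      norm_num
    have e2 : (∫ y in (0:ℝ)..1, hat y * hat y) = 1/3 := by
      rw [intervalIntegral.integral_congr (g := fun y : ℝ => (1-y)*(1-y))
        (by
          intro y hy
          rw [Set.uIcc_of_le (by norm_num : (0:ℝ) ≤ 1)] at hy
          obtain ⟨h1, h2⟩ := hy
          simp only [hat]
          rw [abs_of_nonneg h1, max_eq_right (by linarith)])]
      rw [poly_piece 0 1 1 (-1) (1/3) _ (by norm_num) (fun y _ => by ring)
        (by continuity)]
      norm_num
    rw [e1, e2, Khat]
    norm_num
  · by_cases h1 : k = 1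
    · subst h1
      simp only [Int.cast_one]
      have hsupp : ∀ y : ℝ, y ∉ Set.Ioc (0:ℝ) 1 → hat y * hat (y - 1) = 0 := by
        intro y hy
        simp only [Set.mem_Ioc, not_and_or, not_lt, not_le] at hy
        rcases hy with hy | hy
        · rw [hat_eq_zero (t := y - 1) (by rw [abs_of_nonpos (by linarith)]; linarith),
            mul_zero]
        · rw [hat_eq_zero (by rw [abs_of_pos (by linarith)]; linarith), zero_mul]
      rw [← MeasureTheory.setIntegral_eq_integral_of_forall_compl_eq_zero hsupp]
      rw [← intervalIntegral.integral_of_le (by norm_num : (0:ℝ) ≤ 1)]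
      rw [intervalIntegral.integral_congr (g := fun y : ℝ => (1-y)*y)
        (by
          intro y hy
          rw [Set.uIcc_of_le (by norm_num : (0:ℝ) ≤ 1)] at hy
          obtain ⟨hy1, hy2⟩ := hy
          simp only [hat]
          rw [abs_of_nonneg hy1, abs_of_nonpos (by linarith : y - 1 ≤ 0),
            max_eq_right (by linarith), max_eq_right (by linarith)]
          ring)]
      rw [poly_piece 0 1 0 (1/2) (-(1/3)) _ (by norm_num) (fun y _ => by ring)
        (by continuity)]
      rw [Khat]
      norm_num
    · by_cases hm1 : k = -1
      · subst hm1
        have hcast : ((-1 : ℤ) : ℝ) = -1 := by norm_num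
        rw [hcast]
        have hsupp : ∀ y : ℝ, y ∉ Set.Ioc (-1:ℝ) 0 → hat y * hat (y - (-1)) = 0 := by
          intro y hy
          simp only [Set.mem_Ioc, not_and_or, not_lt, not_le] at hy
          rcases hy with hy | hy
          · rw [hat_eq_zero (by rw [abs_of_nonpos (by linarith)]; linarith), zero_mul]
          · rw [hat_eq_zero (t := y - (-1)) (by rw [abs_of_nonneg (by linarith)]; linarith),
              mul_zero]
        rw [← MeasureTheory.setIntegral_eq_integral_of_forall_compl_eq_zero hsupp]
        rw [← intervalIntegral.integral_of_le (by norm_num : (-1:ℝ) ≤ 0)]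
        rw [intervalIntegral.integral_congr (g := fun y : ℝ => (1+y)*(-y))
          (by
            intro y hy
            rw [Set.uIcc_of_le (by norm_num : (-1:ℝ) ≤ 0)] at hy
            obtain ⟨hy1, hy2⟩ := hy
            simp only [hat]
            rw [abs_of_nonpos hy2, abs_of_nonneg (by linarith : 0 ≤ y - (-1)),
              max_eq_right (by linarith), max_eq_right (by linarith)]
            ring)]
        rw [poly_piece (-1) 0 0 (-(1/2)) (-(1/3)) _ (by norm_num) (fun y _ => by ring)
          (by continuity)]
        rw [Khat]
        norm_num
      · have hk : ∀ y : ℝ, hat y * hat (y - (k:ℝ)) = 0 := by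
          intro y
          rcases le_or_gt 1 |y| with h | h
          · rw [hat_eq_zero h, zero_mul]
          · have h2 : (2:ℝ) ≤ |(k:ℝ)| := by
              have : (2:ℤ) ≤ |k| := by rcases abs_cases k with ⟨he, _⟩ | ⟨he, _⟩ <;> omega
              calc (2:ℝ) = ((2:ℤ):ℝ) := by norm_num
                _ ≤ ((|k|:ℤ):ℝ) := by exact_mod_cast this
                _ = |(k:ℝ)| := by push_cast [Int.cast_abs]; ring
            have h3 : |(k:ℝ)| - |y| ≤ |(k:ℝ) - y| := abs_sub_abs_le_abs_sub _ _
            rw [abs_sub_comm] at h3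
            rw [hat_eq_zero (t := y - (k:ℝ)) (by linarith), mul_zero]
        simp only [hk, integral_zero, Khat]
        simp [h0, h1, hm1]

lemma integral_hat_pair (s a : ℝ) (hs : 0 < s) (k : ℤ) :
    ∫ x : ℝ, hat ((x - a)/s) * hat ((x - (a + s*k))/s) = s * Khat k := by
  have h1 : (fun x : ℝ => hat ((x - a)/s) * hat ((x - (a + s*k))/s))
      = fun x : ℝ => (fun y => hat y * hat (y - (k:ℝ))) ((x - a) / s) := by
    funext x
    simp only
    congr 2
    field_simp
    ring
  rw [h1]
  rw [MeasureTheory.integral_sub_right_eq_self (fun x : ℝ => (fun y => hat y * hat (y - (k:ℝ))) (x/s)) a]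
  rw [MeasureTheory.Measure.integral_comp_div (fun y => hat y * hat (y - (k:ℝ))) s]
  rw [integral_hat_hat, abs_of_pos hs, smul_eq_mul]

section dDim
variable (d : ℕ) (h : ℝ) (r : Fin d → ℕ) (v : Fin d → ℝ)

lemma psi_nonneg (m : Fin d → ℤ) (x : Fin d → ℝ) : 0 ≤ psi d h r v m x :=
  Finset.prod_nonneg fun i _ => hat_nonneg _

lemma continuous_psi (m : Fin d → ℤ) : Continuous (psi d h r v m) :=
  continuous_finset_prod _ fun i _ =>
    continuous_hat.comp (((continuous_apply i).sub continuous_const).div_const _)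

lemma psi_eq_zero_of_far (hh : 0 < h) (hr : ∀ i, 0 < r i) (m : Fin d → ℤ) (x : Fin d → ℝ)
    (i : Fin d) (hi : h * (r i : ℝ) ≤ |x i - gridKnot d h r v m i|) :
    psi d h r v m x = 0 := by
  have hs : (0:ℝ) < h * (r i : ℝ) := mul_pos hh (by exact_mod_cast hr i)
  apply Finset.prod_eq_zero (Finset.mem_univ i)
  apply hat_eq_zero
  rw [abs_div, abs_of_pos hs, le_div_iff₀ hs, one_mul]
  exact hi

lemma hasCompactSupport_psi (hh : 0 < h) (hr : ∀ i, 0 < r i) (m : Fin d → ℤ) :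
    HasCompactSupport (psi d h r v m) := by
  apply HasCompactSupport.intro (K := Set.pi Set.univ
    (fun i => Set.Icc (gridKnot d h r v m i - h * r i) (gridKnot d h r v m i + h * r i)))
    (isCompact_univ_pi fun i => isCompact_Icc)
  intro x hx
  simp only [Set.mem_pi, Set.mem_univ, Set.mem_Icc, forall_true_left, not_forall] at hx
  obtain ⟨i, hi⟩ := hx
  apply psi_eq_zero_of_far d h r v hh hr m x i
  have hs : (0:ℝ) < h * (r i:ℝ) := mul_pos hh (by exact_mod_cast hr i)
  rw [not_and_or, not_le, not_le] at hi
  rcases hi with hi | hi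
  · rw [abs_of_neg (by linarith)]; linarith
  · rw [abs_of_pos (by linarith)]; linarith

lemma integrable_psi_mul (hh : 0 < h) (hr : ∀ i, 0 < r i) (m m' : Fin d → ℤ) :
    Integrable (fun x : Fin d → ℝ => psi d h r v m x * psi d h r v m' x) := by
  apply Continuous.integrable_of_hasCompactSupport
    ((continuous_psi d h r v m).mul (continuous_psi d h r v m'))
  exact (hasCompactSupport_psi d h r v hh hr m).mul_right

lemma integral_psi_mul (hh : 0 < h) (hr : ∀ i, 0 < r i) (m m' : Fin d → ℤ) :
    ∫ x : Fin d → ℝ, psi d h r v m x * psi d h r v m' x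
      = (∏ i, (h * (r i : ℝ))) * ∏ i, Khat (m' i - m i) := by
  set F : Fin d → ℝ → ℝ := fun i y =>
      hat ((y - gridKnot d h r v m i)/(h * (r i:ℝ)))
        * hat ((y - gridKnot d h r v m' i)/(h * (r i:ℝ))) with hF
  have key : (fun x : Fin d → ℝ => psi d h r v m x * psi d h r v m' x)
      = fun x : Fin d → ℝ => ∏ i, F i (x i) := by
    funext x
    rw [psi, psi, ← Finset.prod_mul_distrib]
  rw [key, MeasureTheory.integral_fintype_prod_volume_eq_prod F, ← Finset.prod_mul_distrib]
  apply Finset.prod_congr rfl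
  intro i _
  have hs : (0:ℝ) < h * (r i:ℝ) := mul_pos hh (by exact_mod_cast hr i)
  have hknot : gridKnot d h r v m' i
      = gridKnot d h r v m i + (h * (r i:ℝ)) * ((m' i - m i : ℤ) : ℝ) := by
    simp only [gridKnot]
    push_cast
    ring
  simp only [hF]
  rw [hknot, integral_hat_pair _ _ hs]

end dDim

section Dim
variable {d : ℕ}

/-- weight matrix on corners -/
def cornerW (b b' : Bool) : ℝ := if b = b' then 1/3 else 1/6

def iotaB (b : Bool) : ℤ := if b then 1 else 0

lemma cornerW_nonneg (b b' : Bool) : 0 ≤ cornerW b b' := by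
  unfold cornerW; split <;> norm_num

lemma Khat_expand (κ : ℤ) :
    Khat κ = ∑ p : Bool × Bool, cornerW p.1 p.2 * (if iotaB p.2 - iotaB p.1 = κ then 1 else 0) := by
  rw [Fintype.sum_prod_type]
  simp only [Fintype.sum_bool, iotaB, cornerW]
  by_cases h0 : κ = 0
  · subst h0; norm_num [Khat]
  · by_cases h1 : κ = 1
    · subst h1; norm_num [Khat]
    · by_cases hm1 : κ = -1
      · subst hm1; norm_num [Khat]
      · have c0 : ¬ ((0:ℤ) = κ) := fun hh => h0 hh.symm
        have c1 : ¬ ((1:ℤ) = κ) := fun hh => h1 hh.symm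
        have cm1 : ¬ ((-1:ℤ) = κ) := fun hh => hm1 hh.symm
        simp only [Khat, h0, h1, hm1, if_false, false_or, or_self]
        norm_num [c0, c1, cm1]


/-- tensor weight -/
def WdP (d : ℕ) (p : (Fin d → Bool) × (Fin d → Bool)) : ℝ := ∏ i, cornerW (p.1 i) (p.2 i)

/-- corner shift -/
def deltaP (d : ℕ) (p : (Fin d → Bool) × (Fin d → Bool)) : Fin d → ℤ :=
  fun i => iotaB (p.2 i) - iotaB (p.1 i)

lemma WdP_nonneg (p : (Fin d → Bool) × (Fin d → Bool)) : 0 ≤ WdP d p :=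
  Finset.prod_nonneg fun i _ => cornerW_nonneg _ _

lemma prod_ite_eq_ite_funext (f g : Fin d → ℤ) :
    (∏ i, if f i = g i then (1:ℝ) else 0) = if f = g then 1 else 0 := by
  by_cases hc : f = g
  · rw [if_pos hc]
    exact Finset.prod_eq_one fun i _ => by simp [congrFun hc i]
  · rw [if_neg hc]
    have hex : ∃ i, f i ≠ g i := by
      by_contra hno
      push_neg at hno
      exact hc (funext hno)
    obtain ⟨i, hi⟩ := hex
    exact Finset.prod_eq_zero (Finset.mem_univ i) (by simp [hi])

lemma prod_ite_eq_ite_funextB (f g : Fin d → Bool) :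
    (∏ i, if f i = g i then (1:ℝ) else 0) = if f = g then 1 else 0 := by
  by_cases hc : f = g
  · rw [if_pos hc]
    exact Finset.prod_eq_one fun i _ => by simp [congrFun hc i]
  · rw [if_neg hc]
    have hex : ∃ i, f i ≠ g i := by
      by_contra hno
      push_neg at hno
      exact hc (funext hno)
    obtain ⟨i, hi⟩ := hex
    exact Finset.prod_eq_zero (Finset.mem_univ i) (by simp [hi])

lemma prod_Khat_expand (k : Fin d → ℤ) :
    ∏ i, Khat (k i) = ∑ p : (Fin d → Bool) × (Fin d → Bool),
      WdP d p * (if deltaP d p = k then 1 else 0) := by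
  simp_rw [Khat_expand]
  rw [Finset.prod_univ_sum]
  rw [Fintype.piFinset_univ]
  rw [Fintype.sum_equiv (Equiv.arrowProdEquivProdArrow (Fin d) (fun _ => Bool) (fun _ => Bool))
    (fun φ => ∏ i, (cornerW (φ i).1 (φ i).2 *
      (if iotaB (φ i).2 - iotaB (φ i).1 = k i then 1 else 0)))
    (fun p => WdP d p * (if deltaP d p = k then 1 else 0))
    (fun φ => by
      rw [Finset.prod_mul_distrib,
        prod_ite_eq_ite_funext (fun i => iotaB (φ i).2 - iotaB (φ i).1) k]
      refine congrArg₂ (· * ·) rfl ?_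
      apply if_congr _ rfl rfl
      constructor
      · intro hc
        funext i
        have := congrFun hc i
        simpa [deltaP, Equiv.arrowProdEquivProdArrow] using this
      · intro hc
        have := congrFun hc
        funext i
        simpa [deltaP, Equiv.arrowProdEquivProdArrow] using this i)]

lemma sum_WdP : ∑ p : (Fin d → Bool) × (Fin d → Bool), WdP d p = 1 := by
  rw [← Fintype.sum_equiv (Equiv.arrowProdEquivProdArrow (Fin d) (fun _ => Bool) (fun _ => Bool))
    (fun φ => ∏ i, cornerW (φ i).1 (φ i).2) (fun p => WdP d p) (fun φ => rfl)]
  rw [← Fintype.piFinset_univ,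
    ← Finset.prod_univ_sum (fun _ => (Finset.univ : Finset (Bool × Bool)))
      (fun _ p => cornerW p.1 p.2)]
  apply Finset.prod_eq_one
  intro i _
  rw [Fintype.sum_prod_type]
  simp only [Fintype.sum_bool, cornerW]
  norm_num

lemma WdP_expand (p : (Fin d → Bool) × (Fin d → Bool)) :
    WdP d p = (1/6)^d * ∑ T ∈ (Finset.univ : Finset (Fin d)).powerset,
      ∏ i ∈ T, (if p.1 i = p.2 i then (1:ℝ) else 0) := by
  have h1 : ∀ i : Fin d, cornerW (p.1 i) (p.2 i)
      = 1/6 * ((if p.1 i = p.2 i then (1:ℝ) else 0) + 1) := by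
    intro i
    unfold cornerW
    split <;> norm_num
  rw [WdP]
  calc ∏ i, cornerW (p.1 i) (p.2 i)
      = ∏ i, (1/6 * ((if p.1 i = p.2 i then (1:ℝ) else 0) + 1)) := by
        exact Finset.prod_congr rfl fun i _ => h1 i
    _ = (1/6)^d * ∏ i, ((if p.1 i = p.2 i then (1:ℝ) else 0) + 1) := by
        rw [Finset.prod_mul_distrib, Finset.prod_const]
        congr 2
        simp
    _ = (1/6)^d * ∑ T ∈ (Finset.univ : Finset (Fin d)).powerset,
          ∏ i ∈ T, (if p.1 i = p.2 i then (1:ℝ) else 0) := by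
        rw [Finset.prod_add]
        congr 1
        exact Finset.sum_congr rfl fun T _ => by rw [Finset.prod_const_one, mul_one]

lemma corner_quad_nonneg (T : Finset (Fin d)) (a : (Fin d → Bool) → ℝ) :
    0 ≤ ∑ p : (Fin d → Bool) × (Fin d → Bool),
      (∏ i ∈ T, (if p.1 i = p.2 i then (1:ℝ) else 0)) * (a p.1 * a p.2) := by
  classical
  set fT : (Fin d → Bool) → (Fin d → Bool) := fun ε i => if i ∈ T then ε i else false with hfT
  have hcond : ∀ ε ε' : Fin d → Bool,
      (∏ i ∈ T, if ε i = ε' i then (1:ℝ) else 0) = if fT ε = fT ε' then 1 else 0 := by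
    intro ε ε'
    by_cases hf : fT ε = fT ε'
    · rw [if_pos hf]
      apply Finset.prod_eq_one
      intro i hi
      have := congrFun hf i
      simp only [hfT, hi, if_true] at this
      simp [this]
    · rw [if_neg hf]
      have hex : ∃ i ∈ T, ε i ≠ ε' i := by
        by_contra hno
        push_neg at hno
        refine hf (funext fun i => ?_)
        by_cases hi : i ∈ T
        · simp [hfT, hi, hno i hi]
        · simp [hfT, hi]
      obtain ⟨i, hi, hne⟩ := hex
      exact Finset.prod_eq_zero hi (by simp [hne])
  set B : (Fin d → Bool) → ℝ := fun y => ∑ ε' : Fin d → Bool, if y = fT ε' then a ε' else 0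
    with hB
  have key : ∑ p : (Fin d → Bool) × (Fin d → Bool),
      (∏ i ∈ T, (if p.1 i = p.2 i then (1:ℝ) else 0)) * (a p.1 * a p.2)
      = ∑ y : Fin d → Bool, B y * B y := by
    rw [Fintype.sum_prod_type]
    have step1 : ∀ ε : Fin d → Bool,
        (∑ ε' : Fin d → Bool, (∏ i ∈ T, (if ε i = ε' i then (1:ℝ) else 0)) * (a ε * a ε'))
          = a ε * B (fT ε) := by
      intro ε
      rw [hB]
      simp only
      rw [Finset.mul_sum]
      apply Finset.sum_congr rfl
      intro ε' _
      rw [hcond ε ε']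
      by_cases hc : fT ε = fT ε'
      · simp [hc]
      · simp [hc]
    calc ∑ ε : Fin d → Bool, ∑ ε' : Fin d → Bool,
          (∏ i ∈ T, (if ε i = ε' i then (1:ℝ) else 0)) * (a ε * a ε')
        = ∑ ε : Fin d → Bool, a ε * B (fT ε) := Finset.sum_congr rfl fun ε _ => step1 ε
      _ = ∑ ε : Fin d → Bool, ∑ y : Fin d → Bool,
            if y = fT ε then a ε * B y else 0 := by
          apply Finset.sum_congr rfl
          intro ε _
          rw [Finset.sum_ite_eq' Finset.univ (fT ε) (fun y => a ε * B y)]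
          simp
      _ = ∑ y : Fin d → Bool, ∑ ε : Fin d → Bool,
            if y = fT ε then a ε * B y else 0 := Finset.sum_comm
      _ = ∑ y : Fin d → Bool, (∑ ε : Fin d → Bool, if y = fT ε then a ε else 0) * B y := by
          apply Finset.sum_congr rfl
          intro y _
          rw [Finset.sum_mul]
          apply Finset.sum_congr rfl
          intro ε _
          by_cases hc : y = fT ε
          · simp [hc]
          · simp [hc]
      _ = ∑ y : Fin d → Bool, B y * B y := by
          apply Finset.sum_congr rfl
          intro y _
          simp only [hB]
  rw [key]
  exact Finset.sum_nonneg fun y _ => mul_self_nonneg _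


/-- per-coordinate product of Khat -/
def cK (d : ℕ) (k : Fin d → ℤ) : ℝ := ∏ i, Khat (k i)

def iotaC (d : ℕ) (ε : Fin d → Bool) : Fin d → ℤ := fun i => iotaB (ε i)

lemma deltaP_eq (q : (Fin d → Bool) × (Fin d → Bool)) :
    deltaP d q = iotaC d q.2 - iotaC d q.1 := rfl

lemma abs_mul_le_half (x y : ℝ) : |x| * |y| ≤ (x ^ 2 + y ^ 2) / 2 := by
  nlinarith [sq_nonneg (abs x - abs y), sq_abs x, sq_abs y, abs_nonneg x, abs_nonneg y]

section U
variable {u : (Fin d → ℤ) → ℝ} (hu : Summable fun m => u m ^ 2)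

local notation "M" => Fin d → ℤ
local notation "N" => ∑' m : Fin d → ℤ, u m ^ 2

include hu

lemma summable_shift_sq (a : M) : Summable (fun m : M => u (m + a) ^ 2) :=
  hu.comp_injective (Equiv.addRight a).injective

lemma tsum_shift_sq (a : M) : ∑' m : M, u (m + a) ^ 2 = N :=
  (Equiv.addRight a).tsum_eq (fun m => u m ^ 2)

lemma summable_absmul (a b : M) :
    Summable (fun m : M => |u (m + a)| * |u (m + b)|) := by
  have hg : Summable (fun m : M => (u (m + a) ^ 2 + u (m + b) ^ 2) / 2) :=
    ((summable_shift_sq hu a).add (summable_shift_sq hu b)).div_const 2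
  exact Summable.of_nonneg_of_le (fun m => mul_nonneg (abs_nonneg _) (abs_nonneg _))
    (fun m => abs_mul_le_half _ _) hg

lemma summable_mul (a b : M) : Summable (fun m : M => u (m + a) * u (m + b)) := by
  apply Summable.of_abs
  have : (fun m : M => |u (m + a) * u (m + b)|) = fun m => |u (m + a)| * |u (m + b)| := by
    funext m; rw [abs_mul]
  rw [this]
  exact summable_absmul hu a b

lemma tsum_absmul_le (a b : M) : ∑' m : M, |u (m + a)| * |u (m + b)| ≤ N := by
  have h1 : ∑' m : M, |u (m + a)| * |u (m + b)|
      ≤ ∑' m : M, (u (m + a) ^ 2 + u (m + b) ^ 2) / 2 := by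
    apply Summable.tsum_le_tsum _ (summable_absmul hu a b)
      (((summable_shift_sq hu a).add (summable_shift_sq hu b)).div_const 2)
    intro m
    exact abs_mul_le_half _ _
  rw [tsum_div_const, Summable.tsum_add (summable_shift_sq hu a) (summable_shift_sq hu b),
    tsum_shift_sq hu a, tsum_shift_sq hu b] at h1
  linarith [h1]

lemma abs_tsum_mul_le (a b : M) : |∑' m : M, u (m + a) * u (m + b)| ≤ N := by
  have h1 : |∑' m : M, u (m + a) * u (m + b)| ≤ ∑' m : M, ‖u (m + a) * u (m + b)‖ := by
    rw [← Real.norm_eq_abs]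
    exact norm_tsum_le_tsum_norm (by
      simp only [Real.norm_eq_abs, abs_mul]
      exact summable_absmul hu a b)
  simp only [Real.norm_eq_abs, abs_mul] at h1
  exact h1.trans (tsum_absmul_le hu a b)

lemma tsum_shift_mul (a b : M) :
    ∑' m : M, u (m + a) * u (m + b) = ∑' m : M, u m * u (m + (b - a)) := by
  rw [← (Equiv.addRight a).tsum_eq (fun m => u m * u (m + (b - a)))]
  apply tsum_congr
  intro m
  simp only [Equiv.coe_addRight]
  congr 2
  abel

lemma summable_mul0 (δ : M) : Summable (fun m : M => u m * u (m + δ)) := by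
  have := summable_mul hu 0 δ
  simpa using this

lemma abs_tsum_mul0_le (δ : M) : |∑' m : M, u m * u (m + δ)| ≤ N := by
  have h0 : (fun m : M => u m * u (m + δ)) = fun m : M => u (m + 0) * u (m + δ) := by
    funext m; simp
  rw [h0]
  exact abs_tsum_mul_le hu 0 δ

omit hu in
lemma graph_vanish (v : (Fin d → ℤ) → ℝ) (δ : M) :
    ∀ p : M × M, p ∉ Set.range (fun m : M => (m, m + δ)) →
      (if δ = p.2 - p.1 then v p.1 * v p.2 else 0) = 0 := by
  intro p hp
  rw [if_neg]
  intro hc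
  refine hp ⟨p.1, Prod.ext_iff.mpr ⟨rfl, ?_⟩⟩
  show p.1 + δ = p.2
  rw [hc]
  abel

omit hu in
lemma graph_inj (δ : M) : Function.Injective (fun m : M => (m, m + δ)) := fun m1 m2 hm => by
  simpa using congrArg Prod.fst hm

omit hu in
lemma summable_pair_graph (v : (Fin d → ℤ) → ℝ) (δ : M)
    (hv : Summable (fun m : M => v m * v (m + δ))) :
    Summable (fun p : M × M => if δ = p.2 - p.1 then v p.1 * v p.2 else 0) := by
  apply ((graph_inj δ).summable_iff (graph_vanish v δ)).mp
  apply (summable_congr (f := fun m : M =>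
    (fun p : M × M => if δ = p.2 - p.1 then v p.1 * v p.2 else 0) ((fun m : M => (m, m + δ)) m))
    ?_).mpr hv
  intro m
  simp

omit hu in
lemma tsum_pair_graph (v : (Fin d → ℤ) → ℝ) (δ : M) :
    ∑' p : M × M, (if δ = p.2 - p.1 then v p.1 * v p.2 else 0) = ∑' m : M, v m * v (m + δ) := by
  rw [← (graph_inj δ).tsum_eq (Function.support_subset_iff'.mpr (graph_vanish v δ))]
  apply tsum_congr
  intro m
  simp

lemma summable_absu (δ : M) : Summable (fun m : M => |u m| * |u (m + δ)|) := by
  have := summable_absmul hu 0 δ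
  simpa using this

omit hu in
lemma pair_term_expand (w : (Fin d → ℤ) → ℝ) (p : (Fin d → ℤ) × (Fin d → ℤ)) :
    (w p.1 * w p.2) * cK d (p.2 - p.1)
      = ∑ q : (Fin d → Bool) × (Fin d → Bool),
          WdP d q * (if deltaP d q = p.2 - p.1 then w p.1 * w p.2 else 0) := by
  rw [show cK d (p.2 - p.1) = ∑ q : (Fin d → Bool) × (Fin d → Bool),
    WdP d q * (if deltaP d q = p.2 - p.1 then 1 else 0) from prod_Khat_expand (p.2 - p.1)]
  rw [Finset.mul_sum]
  apply Finset.sum_congr rfl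
  intro q _
  by_cases hc : deltaP d q = p.2 - p.1
  · rw [if_pos hc, if_pos hc, mul_one, mul_comm]
  · rw [if_neg hc, if_neg hc, mul_zero, mul_zero]

lemma main_tsum_eq :
    ∑' p : M × M, (u p.1 * u p.2) * cK d (p.2 - p.1)
      = ∑ q : (Fin d → Bool) × (Fin d → Bool),
          WdP d q * ∑' m : M, u m * u (m + deltaP d q) := by
  calc ∑' p : M × M, (u p.1 * u p.2) * cK d (p.2 - p.1)
      = ∑' p : M × M, ∑ q : (Fin d → Bool) × (Fin d → Bool),
          WdP d q * (if deltaP d q = p.2 - p.1 then u p.1 * u p.2 else 0) :=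
        tsum_congr fun p => pair_term_expand u p
    _ = ∑ q : (Fin d → Bool) × (Fin d → Bool), ∑' p : M × M,
          WdP d q * (if deltaP d q = p.2 - p.1 then u p.1 * u p.2 else 0) :=
        Summable.tsum_finsetSum fun q _ =>
          (summable_pair_graph u (deltaP d q) (summable_mul0 hu _)).mul_left _
    _ = ∑ q : (Fin d → Bool) × (Fin d → Bool),
          WdP d q * ∑' p : M × M, (if deltaP d q = p.2 - p.1 then u p.1 * u p.2 else 0) :=
        Finset.sum_congr rfl fun q _ => tsum_mul_left
    _ = ∑ q : (Fin d → Bool) × (Fin d → Bool),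
          WdP d q * ∑' m : M, u m * u (m + deltaP d q) :=
        Finset.sum_congr rfl fun q _ => by rw [tsum_pair_graph]

lemma main_summable_abs :
    Summable (fun p : M × M => (|u p.1| * |u p.2|) * cK d (p.2 - p.1)) := by
  have hrw : (fun p : M × M => (|u p.1| * |u p.2|) * cK d (p.2 - p.1))
      = fun p : M × M => ∑ q : (Fin d → Bool) × (Fin d → Bool),
          WdP d q * (if deltaP d q = p.2 - p.1 then |u p.1| * |u p.2| else 0) :=
    funext fun p => pair_term_expand (fun m => |u m|) p
  rw [hrw]
  apply summable_sum
  intro q _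
  exact (summable_pair_graph (fun m => |u m|) _ (summable_absu hu _)).mul_left _

lemma main_upper :
    ∑ q : (Fin d → Bool) × (Fin d → Bool), WdP d q * ∑' m : M, u m * u (m + deltaP d q)
      ≤ N := by
  calc ∑ q : (Fin d → Bool) × (Fin d → Bool), WdP d q * ∑' m : M, u m * u (m + deltaP d q)
      ≤ ∑ q : (Fin d → Bool) × (Fin d → Bool), WdP d q * N :=
        Finset.sum_le_sum fun q _ => mul_le_mul_of_nonneg_left
          ((le_abs_self _).trans (abs_tsum_mul0_le hu _)) (WdP_nonneg q)
    _ = N := by rw [← Finset.sum_mul, sum_WdP, one_mul]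

lemma main_lower :
    ((1:ℝ)/3)^d * N
      ≤ ∑ q : (Fin d → Bool) × (Fin d → Bool), WdP d q * ∑' m : M, u m * u (m + deltaP d q) := by
  have hGq : ∀ q : (Fin d → Bool) × (Fin d → Bool),
      (∑' m : M, u m * u (m + deltaP d q))
        = ∑' m : M, u (m + iotaC d q.1) * u (m + iotaC d q.2) := by
    intro q
    rw [deltaP_eq]
    exact (tsum_shift_mul hu _ _).symm
  have hsum : ∑ q : (Fin d → Bool) × (Fin d → Bool),
        WdP d q * ∑' m : M, u m * u (m + deltaP d q)
      = (1/6)^d * ∑ T ∈ (Finset.univ : Finset (Fin d)).powerset,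
          ∑ q : (Fin d → Bool) × (Fin d → Bool),
            (∏ i ∈ T, if q.1 i = q.2 i then (1:ℝ) else 0)
              * ∑' m : M, u m * u (m + deltaP d q) := by
    calc ∑ q : (Fin d → Bool) × (Fin d → Bool),
          WdP d q * ∑' m : M, u m * u (m + deltaP d q)
        = ∑ q : (Fin d → Bool) × (Fin d → Bool), (1/6)^d *
            ∑ T ∈ (Finset.univ : Finset (Fin d)).powerset,
              (∏ i ∈ T, if q.1 i = q.2 i then (1:ℝ) else 0)
                * ∑' m : M, u m * u (m + deltaP d q) := by
          apply Finset.sum_congr rfl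
          intro q _
          rw [WdP_expand q, mul_assoc, Finset.sum_mul]
      _ = (1/6)^d * ∑ q : (Fin d → Bool) × (Fin d → Bool),
            ∑ T ∈ (Finset.univ : Finset (Fin d)).powerset,
              (∏ i ∈ T, if q.1 i = q.2 i then (1:ℝ) else 0)
                * ∑' m : M, u m * u (m + deltaP d q) := by
          rw [Finset.mul_sum]
      _ = (1/6)^d * ∑ T ∈ (Finset.univ : Finset (Fin d)).powerset,
            ∑ q : (Fin d → Bool) × (Fin d → Bool),
              (∏ i ∈ T, if q.1 i = q.2 i then (1:ℝ) else 0)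
                * ∑' m : M, u m * u (m + deltaP d q) := by
          rw [Finset.sum_comm]
  have hT0 : ∀ T ∈ (Finset.univ : Finset (Fin d)).powerset,
      0 ≤ ∑ q : (Fin d → Bool) × (Fin d → Bool),
        (∏ i ∈ T, if q.1 i = q.2 i then (1:ℝ) else 0)
          * ∑' m : M, u m * u (m + deltaP d q) := by
    intro T _
    have step : ∑ q : (Fin d → Bool) × (Fin d → Bool),
        (∏ i ∈ T, if q.1 i = q.2 i then (1:ℝ) else 0)
          * ∑' m : M, u m * u (m + deltaP d q)
        = ∑' m : M, ∑ q : (Fin d → Bool) × (Fin d → Bool),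
            (∏ i ∈ T, if q.1 i = q.2 i then (1:ℝ) else 0)
              * (u (m + iotaC d q.1) * u (m + iotaC d q.2)) := by
      calc ∑ q : (Fin d → Bool) × (Fin d → Bool),
          (∏ i ∈ T, if q.1 i = q.2 i then (1:ℝ) else 0)
            * ∑' m : M, u m * u (m + deltaP d q)
          = ∑ q : (Fin d → Bool) × (Fin d → Bool),
            ∑' m : M, (∏ i ∈ T, if q.1 i = q.2 i then (1:ℝ) else 0)
              * (u (m + iotaC d q.1) * u (m + iotaC d q.2)) := by
            apply Finset.sum_congr rfl
            intro q _
            rw [hGq q, ← tsum_mul_left]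
        _ = ∑' m : M, ∑ q : (Fin d → Bool) × (Fin d → Bool),
            (∏ i ∈ T, if q.1 i = q.2 i then (1:ℝ) else 0)
              * (u (m + iotaC d q.1) * u (m + iotaC d q.2)) :=
            (Summable.tsum_finsetSum (f := fun (q : (Fin d → Bool) × (Fin d → Bool)) (m : Fin d → ℤ) =>
                (∏ i ∈ T, if q.1 i = q.2 i then (1:ℝ) else 0)
                  * (u (m + iotaC d q.1) * u (m + iotaC d q.2)))
              (fun q _ =>
                (summable_mul hu (iotaC d q.1) (iotaC d q.2)).mul_left _)).symm
    rw [step]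
    apply tsum_nonneg
    intro m
    exact corner_quad_nonneg T (fun ε => u (m + iotaC d ε))
  have hTuniv : ∑ q : (Fin d → Bool) × (Fin d → Bool),
      (∏ i ∈ (Finset.univ : Finset (Fin d)), if q.1 i = q.2 i then (1:ℝ) else 0)
        * ∑' m : M, u m * u (m + deltaP d q)
      = 2^d * N := by
    calc ∑ q : (Fin d → Bool) × (Fin d → Bool),
        (∏ i ∈ (Finset.univ : Finset (Fin d)), if q.1 i = q.2 i then (1:ℝ) else 0)
          * ∑' m : M, u m * u (m + deltaP d q)
        = ∑ q : (Fin d → Bool) × (Fin d → Bool), (if q.1 = q.2 then (1:ℝ) else 0)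
            * ∑' m : M, u m * u (m + deltaP d q) :=
          Finset.sum_congr rfl fun q _ => by rw [prod_ite_eq_ite_funextB q.1 q.2]
      _ = ∑ ε : Fin d → Bool, ∑' m : M, u m * u (m + deltaP d (ε, ε)) := by
          rw [Fintype.sum_prod_type]
          apply Finset.sum_congr rfl
          intro ε _
          simp only [ite_mul, one_mul, zero_mul]
          rw [Finset.sum_eq_single ε (fun b _ hb => if_neg (fun hh => hb hh.symm)) (by simp)]
          rw [if_pos rfl]
      _ = ∑ ε : Fin d → Bool, N := by
          apply Finset.sum_congr rfl
          intro ε _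
          have hδ : deltaP d (ε, ε) = (0 : M) := funext fun i => by simp [deltaP]
          rw [hδ]
          apply tsum_congr
          intro m
          rw [add_zero, ← pow_two]
      _ = 2^d * N := by
          rw [Finset.sum_const, Finset.card_univ, nsmul_eq_mul]
          congr 1
          rw [Fintype.card_fun]
          push_cast
          simp
  have hbig : 2^d * N ≤ ∑ T ∈ (Finset.univ : Finset (Fin d)).powerset,
      ∑ q : (Fin d → Bool) × (Fin d → Bool),
        (∏ i ∈ T, if q.1 i = q.2 i then (1:ℝ) else 0)
          * ∑' m : M, u m * u (m + deltaP d q) := by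
    rw [← hTuniv]
    exact Finset.single_le_sum hT0 (Finset.mem_powerset_self _)
  calc ((1:ℝ)/3)^d * N = (1/6)^d * (2^d * N) := by
        rw [← mul_assoc, ← mul_pow]
        norm_num
    _ ≤ ∑ q : (Fin d → Bool) × (Fin d → Bool),
          WdP d q * ∑' m : M, u m * u (m + deltaP d q) := by
        rw [hsum]
        exact mul_le_mul_of_nonneg_left hbig (by positivity)

end U
end Dim

section Chunk5
variable (d : ℕ) (h : ℝ) (r : Fin d → ℕ) (v : Fin d → ℝ)
  (u : (Fin d → ℤ) → ℝ)

local notation "M" => Fin d → ℤ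

lemma cK_eq (m m' : M) : ∏ i, Khat (m' i - m i) = cK d (m' - m) :=
  Finset.prod_congr rfl fun i _ => by rw [Pi.sub_apply]

lemma support_finite (hh : 0 < h) (hr : ∀ i, 0 < r i) (x : Fin d → ℝ) :
    {m : M | psi d h r v m x ≠ 0}.Finite := by
  apply Set.Finite.subset (Set.Finite.pi (fun i : Fin d => Set.finite_Icc
    (⌊(x i - v i)/(h * (r i : ℝ))⌋ - 1) (⌊(x i - v i)/(h * (r i : ℝ))⌋ + 1)))
  intro m hm
  simp only [Set.mem_pi, Set.mem_univ, forall_true_left, Set.mem_Icc]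
  intro i
  have hs : (0:ℝ) < h * (r i : ℝ) := mul_pos hh (by exact_mod_cast hr i)
  have hfac : hat ((x i - gridKnot d h r v m i)/(h * (r i:ℝ))) ≠ 0 := by
    intro h0
    exact hm (Finset.prod_eq_zero (Finset.mem_univ i) h0)
  have habs := abs_lt_one_of_hat_ne_zero hfac
  rw [abs_div, abs_of_pos hs, div_lt_one hs, abs_lt] at habs
  obtain ⟨hl, hr'⟩ := habs
  rw [gridKnot] at hl hr'
  set c : ℝ := (x i - v i)/(h * (r i:ℝ)) with hc
  have hub : (m i : ℝ) < c + 1 := by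
    have hx : ((m i : ℝ) - 1) * (h * (r i:ℝ)) < x i - v i := by nlinarith
    have h2 := (lt_div_iff₀ hs).mpr hx
    rw [hc]
    linarith
  have hlb : c - 1 < (m i : ℝ) := by
    have hx : x i - v i < ((m i : ℝ) + 1) * (h * (r i:ℝ)) := by nlinarith
    have h2 := (div_lt_iff₀ hs).mpr hx
    rw [hc]
    linarith
  constructor
  · have h1 : (⌊c⌋ : ℝ) < ((m i + 1 : ℤ) : ℝ) :=
      lt_of_le_of_lt (Int.floor_le c) (by push_cast; linarith)
    have h2 : ⌊c⌋ < m i + 1 := by exact_mod_cast h1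
    omega
  · have h1 : ((m i - 1 : ℤ) : ℝ) ≤ c := by push_cast; linarith
    have h2 : m i - 1 ≤ ⌊c⌋ := Int.le_floor.mpr h1
    omega

lemma imbed_sq_eq (hh : 0 < h) (hr : ∀ i, 0 < r i) (x : Fin d → ℝ) :
    (imbed d h r v u x)^2
      = ∑' p : M × M, (u p.1 * psi d h r v p.1 x) * (u p.2 * psi d h r v p.2 x) := by
  classical
  set F := (support_finite d h r v hh hr x).toFinset with hF
  have hmem : ∀ m : M, m ∉ F → psi d h r v m x = 0 := by
    intro m hm
    by_contra hcon
    exact hm ((Set.Finite.mem_toFinset _).mpr hcon)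
  have h1 : imbed d h r v u x = ∑ m ∈ F, u m * psi d h r v m x := by
    rw [imbed]
    apply tsum_eq_sum
    intro m hm
    rw [hmem m hm, mul_zero]
  rw [h1, pow_two, Finset.sum_mul_sum, ← Finset.sum_product']
  symm
  apply tsum_eq_sum
  intro p hp
  rw [Finset.mem_product] at hp
  rcases not_and_or.mp hp with hp1 | hp1
  · rw [hmem p.1 hp1, mul_zero, zero_mul]
  · rw [hmem p.2 hp1, mul_zero, mul_zero]

lemma integrable_term (hh : 0 < h) (hr : ∀ i, 0 < r i) (p : M × M) :
    Integrable (fun x : Fin d → ℝ =>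
      (u p.1 * psi d h r v p.1 x) * (u p.2 * psi d h r v p.2 x)) := by
  have hrw : (fun x : Fin d → ℝ =>
      (u p.1 * psi d h r v p.1 x) * (u p.2 * psi d h r v p.2 x))
      = fun x => (u p.1 * u p.2) * (psi d h r v p.1 x * psi d h r v p.2 x) :=
    funext fun x => by ring
  rw [hrw]
  exact (integrable_psi_mul d h r v hh hr p.1 p.2).const_mul _

lemma integral_term (hh : 0 < h) (hr : ∀ i, 0 < r i) (p : M × M) :
    ∫ x : Fin d → ℝ, (u p.1 * psi d h r v p.1 x) * (u p.2 * psi d h r v p.2 x)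
      = (∏ i, (h * (r i : ℝ))) * ((u p.1 * u p.2) * cK d (p.2 - p.1)) := by
  have hrw : (fun x : Fin d → ℝ =>
      (u p.1 * psi d h r v p.1 x) * (u p.2 * psi d h r v p.2 x))
      = fun x => (u p.1 * u p.2) * (psi d h r v p.1 x * psi d h r v p.2 x) :=
    funext fun x => by ring
  rw [hrw, MeasureTheory.integral_const_mul, integral_psi_mul d h r v hh hr p.1 p.2,
    cK_eq]
  ring

lemma integral_norm_term (hh : 0 < h) (hr : ∀ i, 0 < r i) (p : M × M) :
    ∫ x : Fin d → ℝ, ‖(u p.1 * psi d h r v p.1 x) * (u p.2 * psi d h r v p.2 x)‖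
      = (∏ i, (h * (r i : ℝ))) * ((|u p.1| * |u p.2|) * cK d (p.2 - p.1)) := by
  have hrw : (fun x : Fin d → ℝ =>
      ‖(u p.1 * psi d h r v p.1 x) * (u p.2 * psi d h r v p.2 x)‖)
      = fun x => (|u p.1| * |u p.2|) * (psi d h r v p.1 x * psi d h r v p.2 x) := by
    funext x
    rw [Real.norm_eq_abs, abs_mul, abs_mul, abs_mul,
      abs_of_nonneg (psi_nonneg d h r v p.1 x), abs_of_nonneg (psi_nonneg d h r v p.2 x)]
    ring
  rw [hrw, MeasureTheory.integral_const_mul, integral_psi_mul d h r v hh hr p.1 p.2,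
    cK_eq]
  ring


end Chunk5

section Final
variable (d : ℕ) (h : ℝ) (r : Fin d → ℕ) (v : Fin d → ℝ) (u : (Fin d → ℤ) → ℝ)

local notation "M" => Fin d → ℤ

lemma integral_imbed_sq (hh : 0 < h) (hr : ∀ i, 0 < r i)
    (hu : Summable fun m : M => u m ^ 2) :
    ∫ x : Fin d → ℝ, (imbed d h r v u x)^2
      = (∏ i, (h * (r i : ℝ))) *
          ∑ q : (Fin d → Bool) × (Fin d → Bool),
            WdP d q * ∑' m : M, u m * u (m + deltaP d q) := by
  have hpt : (fun x : Fin d → ℝ => (imbed d h r v u x)^2)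
      = fun x => ∑' p : M × M,
          (u p.1 * psi d h r v p.1 x) * (u p.2 * psi d h r v p.2 x) :=
    funext fun x => imbed_sq_eq d h r v u hh hr x
  have hnorm : (fun p : M × M => ∫ x : Fin d → ℝ,
        ‖(u p.1 * psi d h r v p.1 x) * (u p.2 * psi d h r v p.2 x)‖)
      = fun p : M × M => (∏ i, (h * (r i:ℝ))) * ((|u p.1| * |u p.2|) * cK d (p.2 - p.1)) :=
    funext fun p => integral_norm_term d h r v u hh hr p
  have hsumm : Summable (fun p : M × M => ∫ x : Fin d → ℝ,
      ‖(u p.1 * psi d h r v p.1 x) * (u p.2 * psi d h r v p.2 x)‖) := by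
    rw [hnorm]
    exact (main_summable_abs hu).mul_left _
  rw [hpt, ← MeasureTheory.integral_tsum_of_summable_integral_norm
    (integrable_term d h r v u hh hr) hsumm]
  calc ∑' p : M × M, ∫ x : Fin d → ℝ,
        (u p.1 * psi d h r v p.1 x) * (u p.2 * psi d h r v p.2 x)
      = ∑' p : M × M, (∏ i, (h * (r i:ℝ))) * ((u p.1 * u p.2) * cK d (p.2 - p.1)) :=
        tsum_congr fun p => integral_term d h r v u hh hr p
    _ = (∏ i, (h * (r i:ℝ))) * ∑' p : M × M, (u p.1 * u p.2) * cK d (p.2 - p.1) :=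
        tsum_mul_left
    _ = (∏ i, (h * (r i:ℝ))) *
          ∑ q : (Fin d → Bool) × (Fin d → Bool),
            WdP d q * ∑' m : M, u m * u (m + deltaP d q) := by
        rw [main_tsum_eq hu]

end Final

/-- Lemma 3.4: `3^{-d} h^d |u|²_{R2} ≤ ‖u(n)‖²_{L²} ≤ h^d |u|²_{R2}`,
i.e. the lemma holds with `σ² = 1 - 3^{-d}`, uniformly in `h` and the offset `v`. -/
theorem imbed_L2_norm_bounds (d : ℕ) (hd : 1 ≤ d) (h : ℝ) (hh : 0 < h)
    (r : Fin d → ℕ) (hr : ∀ i, 0 < r i) (v : Fin d → ℝ)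
    (u : (Fin d → ℤ) → ℝ) (hu : Summable (fun m : Fin d → ℤ => u m ^ 2)) :
    ((3 : ℝ) ^ d)⁻¹ * (h ^ d * (volR d r * ∑' m : Fin d → ℤ, u m ^ 2)) ≤
        (∫ x : Fin d → ℝ, (imbed d h r v u x) ^ 2) ∧
      (∫ x : Fin d → ℝ, (imbed d h r v u x) ^ 2) ≤
        h ^ d * (volR d r * ∑' m : Fin d → ℤ, u m ^ 2) := by
  have hS : (∏ i, (h * (r i : ℝ))) = h ^ d * volR d r := by
    rw [Finset.prod_mul_distrib, Finset.prod_const, Finset.card_univ, Fintype.card_fin, volR]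
  have hvol : 0 ≤ volR d r := Finset.prod_nonneg fun i _ => by positivity
  have hSpos : 0 ≤ h ^ d * volR d r := mul_nonneg (by positivity) hvol
  have hI := integral_imbed_sq d h r v u hh hr hu
  rw [hS] at hI
  have hinv : ((3:ℝ)^d)⁻¹ = ((1:ℝ)/3)^d := by
    rw [← inv_pow]
    norm_num
  constructor
  · rw [hI]
    calc ((3:ℝ)^d)⁻¹ * (h^d * (volR d r * ∑' m : Fin d → ℤ, u m ^ 2))
        = (h^d * volR d r) * (((1:ℝ)/3)^d * ∑' m : Fin d → ℤ, u m ^ 2) := by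
          rw [hinv]; ring
      _ ≤ (h^d * volR d r) *
            ∑ q : (Fin d → Bool) × (Fin d → Bool),
              WdP d q * ∑' m : Fin d → ℤ, u m * u (m + deltaP d q) :=
          mul_le_mul_of_nonneg_left (main_lower hu) hSpos
  · rw [hI]
    calc (h^d * volR d r) *
          ∑ q : (Fin d → Bool) × (Fin d → Bool),
            WdP d q * ∑' m : Fin d → ℤ, u m * u (m + deltaP d q)
        ≤ (h^d * volR d r) * ∑' m : Fin d → ℤ, u m ^ 2 :=
          mul_le_mul_of_nonneg_left (main_upper hu) hSpos
      _ = h ^ d * (volR d r * ∑' m : Fin d → ℤ, u m ^ 2) := by ring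
end
end
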